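/- arXiv:1106.2623 — 3 statements merged into one kernel-verified Lean document; each statement's English description precedes it below -/
import Mathlib

section
/- Let d ≥ 1 and let H be a subgroup of GL_d(ℂ) acting irreducibly on ℂ^d, i.e., ℂ^d has no H-invariant linear subspace other than {0} and ℂ^d. If every eigenvalue of every element of H has modulus 1, then H is relatively compact in GL_d(ℂ) (equivalently, H is a bounded subset of the d×d complex matrices). -/
noncomputable section


open Module Submodule

/-- Burnside's theorem: a subalgebra of endomorphisms of a nontrivial finite-dimensional
vector space over an algebraically closed field which acts irreducibly is everything. -/
theorem burnside_aux {𝕜 V : Type*} [Field 𝕜] [IsAlgClosed 𝕜] [AddCommGroup V] [Module 𝕜 V]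
    [FiniteDimensional 𝕜 V] [Nontrivial V]
    (A : Subalgebra 𝕜 (Module.End 𝕜 V))
    (hirr : ∀ U : Submodule 𝕜 V, (∀ a ∈ A, Submodule.map a U ≤ U) → U = ⊥ ∨ U = ⊤) :
    A = ⊤ := by
  classical
  -- transitivity
  have htrans : ∀ (x y : V), x ≠ 0 → ∃ a ∈ A, a x = y := by
    intro x y hx
    let U : Submodule 𝕜 V := Submodule.map (LinearMap.applyₗ x) A.toSubmodule
    have hUinv : ∀ a ∈ A, Submodule.map a U ≤ U := by
      rintro b hb _ ⟨_, ⟨a, ha, rfl⟩, rfl⟩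
      exact ⟨b * a, A.mul_mem hb ha, rfl⟩
    have hxU : x ∈ U := ⟨1, A.one_mem, by simp⟩
    rcases hirr U hUinv with h | h
    · exact absurd (h ▸ hxU) (by simpa using hx)
    · have : y ∈ U := h ▸ mem_top
      rcases this with ⟨a, ha, rfl⟩
      exact ⟨a, ha, rfl⟩
  have hone : (1 : Module.End 𝕜 V) ≠ 0 := by
    intro h
    obtain ⟨x, hx⟩ := exists_ne (0 : V)
    exact hx (by simpa using LinearMap.congr_fun h x)
  -- minimal rank
  let P : ℕ → Prop := fun r => ∃ T : Module.End 𝕜 V, T ∈ A ∧ T ≠ 0 ∧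
    finrank 𝕜 (LinearMap.range T) = r
  have hP : ∃ r, P r := ⟨_, 1, A.one_mem, hone, rfl⟩
  obtain ⟨T, hTA, hT0, hTr⟩ := Nat.find_spec hP
  set r := Nat.find hP with hrdef
  have hrmin : ∀ (T' : Module.End 𝕜 V), T' ∈ A → T' ≠ 0 →
      r ≤ finrank 𝕜 (LinearMap.range T') := fun T' h1 h2 =>
    Nat.find_min' hP ⟨T', h1, h2, rfl⟩
  have hr0 : r ≠ 0 := by
    intro h
    rw [h] at hTr
    exact hT0 (LinearMap.range_eq_bot.mp (Submodule.finrank_eq_zero.mp hTr))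
  -- the minimal rank is 1
  have hr1 : finrank 𝕜 (LinearMap.range T) = 1 := by
    by_contra hne
    have h2r : 2 ≤ finrank 𝕜 (LinearMap.range T) := by omega
    obtain ⟨f, hf⟩ := exists_linearIndependent_of_le_finrank h2r
    have hli : LinearIndependent 𝕜 fun i => ((f i : V)) :=
      hf.map' (LinearMap.range T).subtype (Submodule.ker_subtype _)
    obtain ⟨x, hx⟩ := (f 0).2
    obtain ⟨y, hy⟩ := (f 1).2
    have hTx0 : T x ≠ 0 := by
      rw [hx]; exact hli.ne_zero 0
    obtain ⟨S, hSA, hS⟩ := htrans (T x) y hTx0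
    -- eigenvalue of T*S on range T
    have hmaps : ∀ w ∈ LinearMap.range T, (T * S) w ∈ LinearMap.range T := by
      intro w _; exact ⟨S w, rfl⟩
    haveI : Nontrivial (LinearMap.range T) := nontrivial_of_ne (f 0) 0 (hf.ne_zero 0)
    obtain ⟨μ, hμ⟩ := Module.End.exists_eigenvalue ((T * S).restrict hmaps)
    obtain ⟨⟨w, hww⟩, hwe, hw0⟩ := hμ.exists_hasEigenvector
    set g : Module.End 𝕜 V := T * S - μ • 1 with hg
    have hgA : g ∈ A := A.sub_mem (A.mul_mem hTA hSA) (A.smul_mem A.one_mem μ)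
    set T' : Module.End 𝕜 V := g * T with hT'
    have hT'A : T' ∈ A := A.mul_mem hgA hTA
    have hT'x : T' x = T y - μ • T x := by
      have : (T * S) (T x) = T (S (T x)) := rfl
      simp [hT', hg, Module.End.mul_apply, hS, LinearMap.sub_apply]
    have hT'0 : T' ≠ 0 := by
      intro h
      have : T y - μ • T x = 0 := by rw [← hT'x, h]; rfl
      have hcomb : (1 : 𝕜) • (f 1 : V) + (-μ) • (f 0 : V) = 0 := by
        rw [← hx, ← hy]; rw [sub_eq_zero] at this
        simp [this]
      have := Fintype.linearIndependent_iff.mp hli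
        (fun i => if i = 1 then (1 : 𝕜) else -μ) ?_ 1
      · simp at this
      · rw [Fin.sum_univ_two]
        simpa [add_comm] using hcomb
    -- rank of T' is smaller
    have hrange : LinearMap.range T' = Submodule.map g (LinearMap.range T) := by
      rw [hT']
      exact LinearMap.range_comp _ _
    have hlt : finrank 𝕜 (Submodule.map g (LinearMap.range T)) < finrank 𝕜 (LinearMap.range T) := by
      have hdom : Submodule.map g (LinearMap.range T) = LinearMap.range (g.domRestrict (LinearMap.range T)) := by
        rw [LinearMap.range_domRestrict]
      rw [hdom]
      have hrn := LinearMap.finrank_range_add_finrank_ker (g.domRestrict (LinearMap.range T))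
      have hker : finrank 𝕜 (LinearMap.ker (g.domRestrict (LinearMap.range T))) ≠ 0 := by
        intro h
        have hbot := Submodule.finrank_eq_zero.mp h
        have : (⟨w, hww⟩ : LinearMap.range T) ∈ LinearMap.ker (g.domRestrict (LinearMap.range T)) := by
          have : g w = 0 := by
            have h1 : (T * S).restrict hmaps ⟨w, hww⟩ = μ • ⟨w, hww⟩ :=
              Module.End.mem_eigenspace_iff.mp hwe
            have h2 : (T * S) w = μ • w := by
              have := congrArg Subtype.val h1
              simpa [LinearMap.restrict_apply] using this
            simp [hg, LinearMap.sub_apply, h2]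
          simpa [LinearMap.mem_ker, LinearMap.domRestrict_apply] using this
        rw [hbot] at this
        simp at this
        exact hw0 (Subtype.ext this)
      have : finrank 𝕜 (LinearMap.range T) = finrank 𝕜 (LinearMap.range (g.domRestrict (LinearMap.range T))) + finrank 𝕜 (LinearMap.ker (g.domRestrict (LinearMap.range T))) := hrn.symm
      omega
    rw [hTr] at hlt
    exact absurd (hrmin T' hT'A hT'0) (by rw [hrange]; omega)
  -- rank one structure
  obtain ⟨v, hv0, hv⟩ := finrank_eq_one_iff'.mp hr1
  set x₀ : V := (v : V) with hx₀def
  have hx₀ : x₀ ≠ 0 := fun h => hv0 (Subtype.ext h)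
  have hTmem : ∀ z : V, T z ∈ (𝕜 ∙ x₀) := by
    have hWspan : LinearMap.range T ≤ Submodule.span 𝕜 {x₀} := by
      rintro z hz
      obtain ⟨c, hc⟩ := hv ⟨z, hz⟩
      have : c • x₀ = z := congrArg Subtype.val hc
      rw [← this]
      exact Submodule.smul_mem _ _ (Submodule.mem_span_singleton_self x₀)
    exact fun z => hWspan (LinearMap.mem_range_self T z)
  set e := LinearEquiv.toSpanNonzeroSingleton 𝕜 V x₀ hx₀ with hedef
  set f : V →ₗ[𝕜] 𝕜 := (e.symm : (𝕜 ∙ x₀) →ₗ[𝕜] 𝕜) ∘ₗ (T.codRestrict (𝕜 ∙ x₀) hTmem)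
    with hfdef
  have hTf : ∀ z : V, T z = f z • x₀ := by
    intro z
    have h1 : e (f z) = T.codRestrict (𝕜 ∙ x₀) hTmem z := by
      simp [hfdef]
    have h2 : ((e (f z) : V)) = f z • x₀ := by
      simp [hedef]
    have h3 : ((T.codRestrict (𝕜 ∙ x₀) hTmem z : V)) = T z := rfl
    rw [← h3, ← h1, h2]
  have hf0 : ∃ z, f z ≠ 0 := by
    by_contra hc
    push_neg at hc
    apply hT0
    ext z
    simp [hTf z, hc z]
  obtain ⟨z₀, hz₀⟩ := hf0
  -- every functional arises as f ∘ b for b ∈ A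
  have hdual : ∀ g : V →ₗ[𝕜] 𝕜, ∃ b ∈ A, f ∘ₗ b = g := by
    have hWd : Submodule.map (LinearMap.llcomp 𝕜 V V 𝕜 f) A.toSubmodule = ⊤ := by
      set Wd := Submodule.map (LinearMap.llcomp 𝕜 V V 𝕜 f) A.toSubmodule with hWdDef
      have hco : Wd.dualCoannihilator = ⊥ := by
        have hinv : ∀ a ∈ A,
            Submodule.map a Wd.dualCoannihilator ≤ Wd.dualCoannihilator := by
          rintro a ha _ ⟨z, hz, rfl⟩
          refine (Submodule.mem_dualCoannihilator _).mpr ?_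
          rintro φ ⟨b, hb, rfl⟩
          have hba : (LinearMap.llcomp 𝕜 V V 𝕜 f) (b * a) ∈ Wd :=
            ⟨b * a, A.mul_mem hb ha, rfl⟩
          have h5 := (Submodule.mem_dualCoannihilator _).mp hz _ hba
          simpa [LinearMap.llcomp_apply, Module.End.mul_apply] using h5
        rcases hirr _ hinv with h | h
        · exact h
        · exfalso
          have hz₀mem : z₀ ∈ Wd.dualCoannihilator := h ▸ Submodule.mem_top
          have h1W : (LinearMap.llcomp 𝕜 V V 𝕜 f) 1 ∈ Wd := ⟨1, A.one_mem, rfl⟩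
          have := (Submodule.mem_dualCoannihilator _).mp hz₀mem _ h1W
          simp only [LinearMap.llcomp_apply, Module.End.one_apply] at this
          exact hz₀ this
      have hfr := Subspace.finrank_add_finrank_dualCoannihilator_eq Wd
      rw [hco, finrank_bot, add_zero] at hfr
      apply Submodule.eq_top_of_finrank_eq
      rw [hfr, Subspace.dual_finrank_eq]
    intro g
    have hg : g ∈ Submodule.map (LinearMap.llcomp 𝕜 V V 𝕜 f) A.toSubmodule :=
      hWd ▸ Submodule.mem_top
    rcases hg with ⟨b, hb, rfl⟩
    exact ⟨b, hb, rfl⟩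
  -- all rank-one maps are in A
  have hsingle : ∀ (yy : V) (g : V →ₗ[𝕜] 𝕜), (LinearMap.smulRight g yy) ∈ A := by
    intro yy g
    obtain ⟨b, hb, hbg⟩ := hdual g
    obtain ⟨a, ha, hay⟩ := htrans x₀ yy hx₀
    have heq : a * T * b = LinearMap.smulRight g yy := by
      ext z
      have h1 : (a * T * b) z = a (T (b z)) := rfl
      rw [h1, hTf (b z), map_smul, hay]
      have h2 : f (b z) = g z := by rw [← hbg]; rfl
      rw [h2, LinearMap.smulRight_apply]
    exact heq ▸ A.mul_mem (A.mul_mem ha hTA) hb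
  -- conclude
  rw [eq_top_iff]
  rintro φ -
  let B := Module.finBasis 𝕜 V
  have hφ : φ = ∑ i, LinearMap.smulRight (B.coord i ∘ₗ φ) (B i) := by
    ext z
    rw [LinearMap.sum_apply]
    simp only [LinearMap.smulRight_apply, LinearMap.comp_apply, Basis.coord_apply]
    exact (B.sum_repr (φ z)).symm
  rw [hφ]
  exact Subalgebra.sum_mem A (fun i _ => hsingle _ _)


open Polynomial in
theorem trace_bound {d : ℕ} (N : Matrix (Fin d) (Fin d) ℂ)
    (h : ∀ z : ℂ, Module.End.HasEigenvalue (Matrix.mulVecLin N) z → ‖z‖ = 1) :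
    ‖N.trace‖ ≤ d := by
  have hroots : ∀ μ ∈ N.charpoly.roots, ‖μ‖ = 1 := by
    intro μ hμ
    apply h
    have hroot : N.charpoly.IsRoot μ := isRoot_of_mem_roots hμ
    have hmap : (Matrix.charmatrix N).map (evalRingHom μ) =
        μ • (1 : Matrix (Fin d) (Fin d) ℂ) - N := by
      ext i j
      by_cases hij : i = j <;>
        simp [hij, Matrix.charmatrix_apply, Matrix.map_apply, Matrix.one_apply,
          Matrix.diagonal_apply, Matrix.sub_apply, Matrix.smul_apply]
    have hdet : (μ • (1 : Matrix (Fin d) (Fin d) ℂ) - N).det = 0 := by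
      have h2 := RingHom.map_det (evalRingHom μ) (Matrix.charmatrix N)
      rw [RingHom.mapMatrix_apply, hmap] at h2
      rw [← h2]
      simpa [Matrix.charpoly] using hroot
    obtain ⟨vv, hvv0, hvv⟩ := (Matrix.exists_mulVec_eq_zero_iff).mpr hdet
    have hev : N.mulVec vv = μ • vv := by
      have := hvv
      rw [Matrix.sub_mulVec, sub_eq_zero] at this
      rw [← this, Matrix.smul_mulVec, Matrix.one_mulVec]
    exact Module.End.hasEigenvalue_of_hasEigenvector
      ⟨Module.End.mem_eigenspace_iff.mpr (by simpa [Matrix.mulVecLin_apply] using hev), hvv0⟩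
  have hcard : Multiset.card N.charpoly.roots = d := by
    rw [IsAlgClosed.card_roots_eq_natDegree, Matrix.charpoly_natDegree_eq_dim, Fintype.card_fin]
  calc ‖N.trace‖ = ‖N.charpoly.roots.sum‖ := by
        rw [Matrix.trace_eq_sum_roots_charpoly]
    _ ≤ (N.charpoly.roots.map fun z => ‖z‖).sum := norm_multiset_sum_le _
    _ = ((N.charpoly.roots.map fun (_ : ℂ) => (1:ℝ))).sum := by
        congr 1
        apply Multiset.map_congr rfl
        intro z hz
        rw [hroots z hz]
    _ = d := by
        rw [Multiset.map_const', Multiset.sum_replicate, hcard, nsmul_eq_mul, mul_one]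

theorem relatively_compact_aux
    (d : ℕ) (hd : 1 ≤ d) (H : Subgroup (GL (Fin d) ℂ))
    (hirr : ∀ U : Submodule ℂ (Fin d → ℂ),
      (∀ h : H, Submodule.map
        (Matrix.mulVecLin (((h : GL (Fin d) ℂ) : Matrix (Fin d) (Fin d) ℂ))) U = U) →
      U = ⊥ ∨ U = ⊤)
    (heig : ∀ h : H, ∀ z : ℂ,
      Module.End.HasEigenvalue
        (Matrix.mulVecLin (((h : GL (Fin d) ℂ) : Matrix (Fin d) (Fin d) ℂ))) z →
      ‖z‖ = 1) :
    IsCompact (closure (H : Set (GL (Fin d) ℂ))) := by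
  classical
  haveI : Nonempty (Fin d) := ⟨⟨0, hd⟩⟩
  set s : Set (Matrix (Fin d) (Fin d) ℂ) :=
    Set.range (fun h : H => ((h : GL (Fin d) ℂ) : Matrix (Fin d) (Fin d) ℂ)) with hsdef
  have hs1 : (1 : Matrix (Fin d) (Fin d) ℂ) ∈ s := ⟨1, by simp⟩
  have hsmul : ∀ M ∈ s, ∀ N ∈ s, M * N ∈ s := by
    rintro _ ⟨h₁, rfl⟩ _ ⟨h₂, rfl⟩
    exact ⟨h₁ * h₂, by simp⟩
  have hseig : ∀ M ∈ s, ∀ z : ℂ,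
      Module.End.HasEigenvalue (Matrix.mulVecLin M) z → ‖z‖ = 1 := by
    rintro _ ⟨h, rfl⟩ z hz
    exact heig h z hz
  -- irreducibility for the set `s`
  have hinv : ∀ U : Submodule ℂ (Fin d → ℂ),
      (∀ M ∈ s, Submodule.map (Matrix.mulVecLin M) U ≤ U) → U = ⊥ ∨ U = ⊤ := by
    intro U hU
    apply hirr U
    intro h
    have h1 : Submodule.map
        (Matrix.mulVecLin (((h : GL (Fin d) ℂ) : Matrix (Fin d) (Fin d) ℂ))) U ≤ U :=
      hU _ ⟨h, rfl⟩
    have h2 : Submodule.map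
        (Matrix.mulVecLin ((((h⁻¹ : H) : GL (Fin d) ℂ) : Matrix (Fin d) (Fin d) ℂ))) U ≤ U :=
      hU _ ⟨h⁻¹, rfl⟩
    refine le_antisymm h1 ?_
    intro x hx
    have hcomp : (Matrix.mulVecLin (((h : GL (Fin d) ℂ) : Matrix (Fin d) (Fin d) ℂ))).comp
        (Matrix.mulVecLin ((((h⁻¹ : H) : GL (Fin d) ℂ) : Matrix (Fin d) (Fin d) ℂ)))
        = LinearMap.id := by
      rw [← Matrix.mulVecLin_mul]
      have hm : ((h : GL (Fin d) ℂ) : Matrix (Fin d) (Fin d) ℂ) *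
          (((h⁻¹ : H) : GL (Fin d) ℂ) : Matrix (Fin d) (Fin d) ℂ) = 1 := by
        have : ((h : GL (Fin d) ℂ) * ((h⁻¹ : H) : GL (Fin d) ℂ)) = 1 := by
          rw [← Subgroup.coe_mul, mul_inv_cancel]; rfl
        calc ((h : GL (Fin d) ℂ) : Matrix (Fin d) (Fin d) ℂ) *
              (((h⁻¹ : H) : GL (Fin d) ℂ) : Matrix (Fin d) (Fin d) ℂ)
            = (((h : GL (Fin d) ℂ) * ((h⁻¹ : H) : GL (Fin d) ℂ) : GL (Fin d) ℂ) :
                Matrix (Fin d) (Fin d) ℂ) := by rw [Units.val_mul]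
          _ = 1 := by rw [this, Units.val_one]
      rw [hm, Matrix.mulVecLin_one]
    have hx' : Matrix.mulVecLin ((((h⁻¹ : H) : GL (Fin d) ℂ) : Matrix (Fin d) (Fin d) ℂ)) x ∈ U :=
      h2 (Submodule.mem_map_of_mem hx)
    refine ⟨_, hx', ?_⟩
    rw [← LinearMap.comp_apply, hcomp, LinearMap.id_apply]
  -- Burnside
  have hirrEnd : ∀ U : Submodule ℂ (Fin d → ℂ),
      (∀ a ∈ Algebra.adjoin ℂ (Matrix.mulVecLin '' s), Submodule.map a U ≤ U) →
      U = ⊥ ∨ U = ⊤ := by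
    intro U hU
    apply hinv U
    intro M hM
    exact hU _ (Algebra.subset_adjoin ⟨M, hM, rfl⟩)
  have hA : Algebra.adjoin ℂ (Matrix.mulVecLin '' s) = ⊤ := burnside_aux _ hirrEnd
  -- span of `mulVecLin '' s` is everything
  have hspanE : Submodule.span ℂ (Matrix.mulVecLin '' s) = ⊤ := by
    let Smon : Submonoid (Module.End ℂ (Fin d → ℂ)) :=
      { carrier := Matrix.mulVecLin '' s
        one_mem' := ⟨1, hs1, Matrix.mulVecLin_one⟩
        mul_mem' := by
          rintro _ _ ⟨M, hM, rfl⟩ ⟨N, hN, rfl⟩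
          refine ⟨M * N, hsmul M hM N hN, ?_⟩
          rw [Matrix.mulVecLin_mul]; rfl }
    have hclosure : Submonoid.closure (Matrix.mulVecLin '' s) = Smon :=
      Submonoid.closure_eq (S := Smon)
    have h1 := Algebra.adjoin_eq_span (R := ℂ) (s := Matrix.mulVecLin '' s)
    rw [hA, hclosure] at h1
    exact ((Algebra.top_toSubmodule (R := ℂ) (A := Module.End ℂ (Fin d → ℂ))) ▸ h1).symm
  -- span of `s` is all matrices
  have hspan : Submodule.span ℂ s = ⊤ := by
    rw [eq_top_iff]
    rintro M -
    have hM : Matrix.mulVecLin M ∈ Submodule.span ℂ (⇑Matrix.toLin' '' s) := by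
      have hcoe : ⇑(Matrix.toLin' (m := Fin d) (n := Fin d) (R := ℂ)) = Matrix.mulVecLin := rfl
      rw [hcoe, hspanE]; exact Submodule.mem_top
    rw [← LinearEquiv.coe_coe, Submodule.span_image] at hM
    rcases hM with ⟨N, hN, hNe⟩
    have : N = M := Matrix.toLin'.injective hNe
    exact this ▸ hN
  -- extract a basis of matrices from `s`
  obtain ⟨t, hts, htsp, htli⟩ := exists_linearIndependent ℂ s
  rw [hspan] at htsp
  have htfin : t.Finite := htli.setFinite
  haveI := htfin.fintype
  -- the trace pairing map
  let Φ : Matrix (Fin d) (Fin d) ℂ →ₗ[ℂ] (t → ℂ) :=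
    LinearMap.pi fun b : t =>
      (Matrix.traceLinearMap (Fin d) ℂ ℂ) ∘ₗ
        (LinearMap.mulRight ℂ (b : Matrix (Fin d) (Fin d) ℂ))
  have hΦapp : ∀ (M : Matrix (Fin d) (Fin d) ℂ) (b : t),
      Φ M b = (M * (b : Matrix (Fin d) (Fin d) ℂ)).trace := fun M b => rfl
  have hΦinj : Function.Injective Φ := by
    rw [← LinearMap.ker_eq_bot, Submodule.eq_bot_iff]
    intro a ha
    rw [LinearMap.mem_ker] at ha
    have htr : ∀ N : Matrix (Fin d) (Fin d) ℂ, (a * N).trace = 0 := by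
      have hker : Submodule.span ℂ t ≤ LinearMap.ker
          ((Matrix.traceLinearMap (Fin d) ℂ ℂ) ∘ₗ (LinearMap.mulLeft ℂ a)) := by
        rw [Submodule.span_le]
        intro b hb
        have hcomp := congrFun ha ⟨b, hb⟩
        rw [hΦapp] at hcomp
        simpa [LinearMap.mem_ker, LinearMap.mulLeft_apply] using hcomp
      intro N
      have hN : N ∈ Submodule.span ℂ t := htsp ▸ Submodule.mem_top
      have := hker hN
      simpa [LinearMap.mem_ker, LinearMap.mulLeft_apply] using this
    ext i j
    have h0 := htr (Matrix.single j i 1)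
    rw [Matrix.trace] at h0
    simpa [Matrix.diag, Matrix.mul_apply, Matrix.single, ite_and,
      Finset.sum_ite_eq, Finset.mem_univ] using h0
  -- inverse of `Φ` and entry bounds
  let ψ : (LinearMap.range Φ) →ₗ[ℂ] Matrix (Fin d) (Fin d) ℂ :=
    (LinearEquiv.ofInjective Φ hΦinj).symm.toLinearMap
  have hψ : ∀ M, ψ ⟨Φ M, LinearMap.mem_range_self _ M⟩ = M := by
    intro M
    have h1 : (LinearEquiv.ofInjective Φ hΦinj) M = ⟨Φ M, LinearMap.mem_range_self _ M⟩ :=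
      Subtype.ext (by simp [LinearEquiv.ofInjective_apply])
    rw [← h1]
    exact (LinearEquiv.ofInjective Φ hΦinj).symm_apply_apply M
  let L : Fin d → Fin d → ((LinearMap.range Φ) →ₗ[ℂ] ℂ) := fun i j =>
    { toFun := fun x => ψ x i j
      map_add' := fun x y => by show ψ (x + y) i j = _; rw [map_add]; rfl
      map_smul' := fun c x => by show ψ (c • x) i j = _; rw [map_smul]; rfl }
  let Lc : Fin d → Fin d → ((LinearMap.range Φ) →L[ℂ] ℂ) := fun i j =>
    LinearMap.toContinuousLinearMap (L i j)
  have hd0 : (0:ℝ) ≤ (d : ℝ) := Nat.cast_nonneg d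
  have hΦb : ∀ M ∈ s, ‖Φ M‖ ≤ (d : ℝ) := by
    intro M hM
    rw [pi_norm_le_iff_of_nonneg hd0]
    intro b
    have hMb := hsmul M hM _ (hts b.2)
    have habs := trace_bound _ (hseig _ hMb)
    rw [hΦapp]
    exact habs
  let C : Fin d → Fin d → ℝ := fun i j => ‖Lc i j‖ * d
  have hC : ∀ M ∈ s, ∀ i j, ‖M i j‖ ≤ C i j := by
    intro M hM i j
    have h1 : M i j = Lc i j ⟨Φ M, LinearMap.mem_range_self _ M⟩ := by
      have h2 : Lc i j ⟨Φ M, LinearMap.mem_range_self _ M⟩ =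
          ψ ⟨Φ M, LinearMap.mem_range_self _ M⟩ i j := by
        simp [Lc, L]
      rw [h2, hψ]
    rw [h1]
    calc ‖Lc i j ⟨Φ M, LinearMap.mem_range_self _ M⟩‖
        ≤ ‖Lc i j‖ * ‖(⟨Φ M, LinearMap.mem_range_self _ M⟩ : LinearMap.range Φ)‖ :=
          (Lc i j).le_opNorm _
      _ ≤ ‖Lc i j‖ * d := by
          have h3 : ‖(⟨Φ M, LinearMap.mem_range_self _ M⟩ : LinearMap.range Φ)‖ = ‖Φ M‖ := rfl
          rw [h3]
          exact mul_le_mul_of_nonneg_left (hΦb M hM) (norm_nonneg (Lc i j))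
  -- the compact set of matrices
  let Q : Set (Matrix (Fin d) (Fin d) ℂ) :=
    Set.univ.pi fun i : Fin d => Set.univ.pi fun j : Fin d => Metric.closedBall (0:ℂ) (C i j)
  have hQc : IsCompact Q :=
    isCompact_univ_pi fun i => isCompact_univ_pi fun j => isCompact_closedBall _ _
  have hQcl : IsClosed Q :=
    isClosed_set_pi fun i _ => isClosed_set_pi fun j _ => Metric.isClosed_closedBall
  have hsQ : s ⊆ Q := by
    intro M hM
    refine Set.mem_univ_pi.mpr ?_
    intro i
    rw [Set.mem_univ_pi]
    intro j
    rw [mem_closedBall_zero_iff]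
    exact hC M hM i j
  -- the compact set in GL
  let K : Set (GL (Fin d) ℂ) :=
    ((fun u : GL (Fin d) ℂ => (u : Matrix (Fin d) (Fin d) ℂ)) ⁻¹' Q) ∩
    ((fun u : GL (Fin d) ℂ => ((u⁻¹ : GL (Fin d) ℂ) : Matrix (Fin d) (Fin d) ℂ)) ⁻¹' Q)
  have hcont1 : Continuous (fun u : GL (Fin d) ℂ => (u : Matrix (Fin d) (Fin d) ℂ)) :=
    Units.continuous_val
  have hcont2 : Continuous
      (fun u : GL (Fin d) ℂ => ((u⁻¹ : GL (Fin d) ℂ) : Matrix (Fin d) (Fin d) ℂ)) :=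
    Units.continuous_coe_inv
  have hKcl : IsClosed K := (hQcl.preimage hcont1).inter (hQcl.preimage hcont2)
  have hHK : (H : Set (GL (Fin d) ℂ)) ⊆ K := by
    intro u hu
    constructor
    · exact hsQ ⟨(⟨u, hu⟩ : H), rfl⟩
    · exact hsQ ⟨(⟨u, hu⟩ : H)⁻¹, rfl⟩
  have hKc : IsCompact K := by
    rw [Units.isEmbedding_embedProduct.isCompact_iff]
    have himg : (Units.embedProduct _) '' K =
        (Set.range (Units.embedProduct (Matrix (Fin d) (Fin d) ℂ))) ∩
        (Q ×ˢ (MulOpposite.unop ⁻¹' Q)) := by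
      ext p
      constructor
      · rintro ⟨u, ⟨hu1, hu2⟩, rfl⟩
        exact ⟨⟨u, rfl⟩, hu1, hu2⟩
      · rintro ⟨⟨u, rfl⟩, h1, h2⟩
        exact ⟨u, ⟨h1, h2⟩, rfl⟩
    rw [himg]
    have hrange : IsClosed (Set.range (Units.embedProduct (Matrix (Fin d) (Fin d) ℂ))) := by
      have heq : Set.range (Units.embedProduct (Matrix (Fin d) (Fin d) ℂ)) =
          {p : Matrix (Fin d) (Fin d) ℂ × (Matrix (Fin d) (Fin d) ℂ)ᵐᵒᵖ |
            p.1 * p.2.unop = 1} ∩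
          {p : Matrix (Fin d) (Fin d) ℂ × (Matrix (Fin d) (Fin d) ℂ)ᵐᵒᵖ |
            p.2.unop * p.1 = 1} := by
        ext p
        constructor
        · rintro ⟨u, rfl⟩
          exact ⟨u.mul_inv, u.inv_mul⟩
        · rintro ⟨h1, h2⟩
          exact ⟨⟨p.1, p.2.unop, h1, h2⟩, Prod.ext rfl (MulOpposite.op_unop _)⟩
      rw [heq]
      apply IsClosed.inter
      · exact isClosed_eq
          (continuous_fst.mul (MulOpposite.continuous_unop.comp continuous_snd))
          continuous_const
      · exact isClosed_eq
          ((MulOpposite.continuous_unop.comp continuous_snd).mul continuous_fst)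
          continuous_const
    have hQQ : IsCompact (Q ×ˢ (MulOpposite.unop ⁻¹' Q)) := by
      apply IsCompact.prod hQc
      exact (MulOpposite.opHomeomorph.symm.isCompact_preimage).mpr hQc
    exact hQQ.inter_left hrange
  exact hKc.of_isClosed_subset isClosed_closure (closure_minimal hHK hKcl)


/-- The subgroup `H` of `GL_d(ℂ)` acts irreducibly on `ℂ^d`: the only `H`-invariant
linear subspaces of `ℂ^d` are `{0}` and `ℂ^d`. -/
def ActsIrreducibly (d : ℕ) (H : Subgroup (GL (Fin d) ℂ)) : Prop :=
  ∀ U : Submodule ℂ (Fin d → ℂ),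
    (∀ h : H, Submodule.map
      (Matrix.mulVecLin (((h : GL (Fin d) ℂ) : Matrix (Fin d) (Fin d) ℂ))) U = U) →
    U = ⊥ ∨ U = ⊤

/-- Lemma (Bekka–Guivarc'h).  Let `H` be a subgroup of `GL_d(ℂ)` acting irreducibly on
`ℂ^d`.  If every eigenvalue of every element of `H` has modulus `1`, then `H` is
relatively compact in `GL_d(ℂ)`. -/
theorem relatively_compact_of_irreducible_eigenvalues_modulus_one
    (d : ℕ) (hd : 1 ≤ d) (H : Subgroup (GL (Fin d) ℂ))
    (hirr : ActsIrreducibly d H)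
    (heig : ∀ h : H, ∀ z : ℂ,
      Module.End.HasEigenvalue
        (Matrix.mulVecLin (((h : GL (Fin d) ℂ) : Matrix (Fin d) (Fin d) ℂ))) z →
      ‖z‖ = 1) :
    IsCompact (closure (H : Set (GL (Fin d) ℂ))) := by
  exact relatively_compact_aux d hd H hirr heig

end
end

section
/- Let d ≥ 1 and let H be a subgroup of GL_d(ℂ) acting irreducibly on ℂ^d, i.e., ℂ^d has no H-invariant linear subspace other than {0} and ℂ^d. If there exists an integer N ≥ 1 such that every eigenvalue of every element of H is an N-th root of unity, then H is finite. -/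
noncomputable section

set_option synthInstance.maxHeartbeats 1000000
set_option maxHeartbeats 1000000

open Module Matrix Polynomial
open scoped Pointwise

section Burnside

variable {d : ℕ} {R : Type} [Ring R] [Algebra ℂ R] [Module R (Fin d → ℂ)]
  [IsScalarTower ℂ R (Fin d → ℂ)]

/-- Simplicity of `ℂ^d` as a module over a transitively-acting ring. -/
lemma burnside_simple [NeZero d]
    (hA : ∀ v : Fin d → ℂ, v ≠ 0 → ∀ w : Fin d → ℂ, ∃ r : R, r • v = w) :
    IsSimpleModule R (Fin d → ℂ) := by
  have hbt : (⊥ : Submodule R (Fin d → ℂ)) ≠ ⊤ := by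
    intro h
    obtain ⟨x, hx⟩ := exists_ne (0 : Fin d → ℂ)
    exact hx (by simpa using (h ▸ Submodule.mem_top : x ∈ (⊥ : Submodule R (Fin d → ℂ))))
  letI : Nontrivial (Submodule R (Fin d → ℂ)) := ⟨⊥, ⊤, hbt⟩
  refine IsSimpleModule.mk (toIsSimpleOrder := ⟨fun U => ?_⟩)
  by_cases hU : ∃ v ∈ U, v ≠ 0
  · obtain ⟨v, hvU, hv⟩ := hU
    right
    rw [eq_top_iff]
    intro w _
    obtain ⟨r, hr⟩ := hA v hv w
    exact hr ▸ U.smul_mem r hvU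
  · left
    rw [eq_bot_iff]
    intro x hx
    by_contra hxne
    exact hU ⟨x, hx, by simpa using hxne⟩

/-- Schur's lemma for this situation. -/
lemma burnside_schur [NeZero d]
    (hA : ∀ v : Fin d → ℂ, v ≠ 0 → ∀ w : Fin d → ℂ, ∃ r : R, r • v = w)
    (f : (Fin d → ℂ) →ₗ[R] (Fin d → ℂ)) : ∃ c : ℂ, ∀ v, f v = c • v := by
  haveI := burnside_simple (R := R) hA
  have hsmul : ∀ (c : ℂ) (v : Fin d → ℂ), f (c • v) = c • f v := by
    intro c v
    have h1 : c • v = (c • (1 : R)) • v := by rw [smul_assoc, one_smul]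
    rw [h1, f.map_smul, smul_assoc, one_smul]
  let g : Module.End ℂ (Fin d → ℂ) :=
    { toFun := f, map_add' := f.map_add, map_smul' := hsmul }
  obtain ⟨c, hc⟩ := Module.End.exists_eigenvalue g
  obtain ⟨v0, hv0⟩ := hc.exists_hasEigenvector
  have hv0e : f v0 = c • v0 := Module.End.mem_eigenspace_iff.mp hv0.1
  let K : Submodule R (Fin d → ℂ) :=
    { carrier := {v | f v = c • v}
      add_mem' := by
        intro x y hx hy
        simp only [Set.mem_setOf_eq] at *
        rw [f.map_add, hx, hy, smul_add]
      zero_mem' := by simp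
      smul_mem' := by
        intro r v hv
        simp only [Set.mem_setOf_eq] at *
        rw [f.map_smul, hv, smul_comm]
        }
  have hKne : K ≠ ⊥ := by
    intro h
    have : v0 ∈ K := hv0e
    rw [h] at this
    exact hv0.2 (by simpa using this)
  have hKtop : K = ⊤ := (eq_bot_or_eq_top K).resolve_left hKne
  refine ⟨c, fun v => ?_⟩
  have : v ∈ K := hKtop ▸ Submodule.mem_top
  exact this

lemma IsSimpleModule.isSemisimple {R M : Type*} [Ring R] [AddCommGroup M] [Module R M]
    [h : IsSimpleModule R M] : IsSemisimpleModule R M := by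
  apply IsSemisimpleModule.of_sSup_simples_eq_top
  have htop : IsSimpleModule R (⊤ : Submodule R M) :=
    IsSimpleModule.congr Submodule.topEquiv
  exact le_antisymm le_top (le_sSup htop)

/-- Semisimplicity of a finite power of `ℂ^d` over `R`. -/
lemma burnside_semisimple [NeZero d]
    (hA : ∀ v : Fin d → ℂ, v ≠ 0 → ∀ w : Fin d → ℂ, ∃ r : R, r • v = w) (n : ℕ) :
    IsSemisimpleModule R (Fin n → (Fin d → ℂ)) := by
  haveI := burnside_simple (R := R) hA
  haveI : IsSemisimpleModule R (Fin d → ℂ) := IsSimpleModule.isSemisimple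
  apply isSemisimpleModule_of_isSemisimpleModule_submodule'
    (p := fun i : Fin n => LinearMap.range (LinearMap.single R (fun _ : Fin n => Fin d → ℂ) i))
  · intro i
    have hinj : Function.Injective (LinearMap.single R (fun _ : Fin n => Fin d → ℂ) i) := by
      intro x y h
      have := congrFun h i
      simpa using this
    exact IsSemisimpleModule.congr
      (LinearEquiv.ofInjective (LinearMap.single R (fun _ : Fin n => Fin d → ℂ) i) hinj).symm
  · rw [eq_top_iff]
    intro x _
    have hx : x = ∑ i : Fin n, Pi.single i (x i) := by
      rw [Finset.univ_sum_single]
    rw [hx]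
    apply Submodule.sum_mem
    intro i _
    apply Submodule.mem_iSup_of_mem i
    exact ⟨x i, rfl⟩

/-- The key step of the density argument. -/
lemma burnside_key [NeZero d]
    (hA : ∀ v : Fin d → ℂ, v ≠ 0 → ∀ w : Fin d → ℂ, ∃ r : R, r • v = w)
    (n : ℕ) (v : Fin (n + 1) → (Fin d → ℂ)) (hv : LinearIndependent ℂ v) :
    ∃ r : R, (∀ i : Fin n, r • (v i.castSucc) = 0) ∧ r • (v (Fin.last n)) ≠ 0 := by
  by_contra hcon
  push_neg at hcon
  have hcon' : ∀ r : R, (∀ i : Fin n, r • v i.castSucc = 0) → r • v (Fin.last n) = 0 :=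
    fun r h => hcon r h
  let Φ : R →ₗ[R] (Fin n → (Fin d → ℂ)) :=
    { toFun := fun r => fun i => r • (v i.castSucc)
      map_add' := by intro a b; funext i; simp [add_smul]
      map_smul' := by intro b a; funext i; simp [mul_smul] }
  let ψ0 : R →ₗ[R] (Fin d → ℂ) :=
    { toFun := fun r => r • (v (Fin.last n))
      map_add' := by intro a b; simp [add_smul]
      map_smul' := by intro b a; simp [mul_smul] }
  have hker : LinearMap.ker Φ ≤ LinearMap.ker ψ0 := by
    intro a ha
    rw [LinearMap.mem_ker] at ha ⊢
    exact hcon' a (fun i => congrFun ha i)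
  let lift : (R ⧸ LinearMap.ker Φ) →ₗ[R] (Fin d → ℂ) := Submodule.liftQ _ ψ0 hker
  let e : (R ⧸ LinearMap.ker Φ) ≃ₗ[R] LinearMap.range Φ := Φ.quotKerEquivRange
  haveI : IsSemisimpleModule R (Fin n → (Fin d → ℂ)) := burnside_semisimple hA n
  obtain ⟨W', hW'⟩ := exists_isCompl (LinearMap.range Φ)
  let π := (LinearMap.range Φ).linearProjOfIsCompl W' hW'
  let Ψ : (Fin n → (Fin d → ℂ)) →ₗ[R] (Fin d → ℂ) :=
    lift ∘ₗ (e.symm : LinearMap.range Φ →ₗ[R] (R ⧸ LinearMap.ker Φ)) ∘ₗ π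
  have hΨ : ∀ r : R, Ψ (Φ r) = r • (v (Fin.last n)) := by
    intro a
    have h1 : π (Φ a) = ⟨Φ a, LinearMap.mem_range_self Φ a⟩ :=
      Submodule.linearProjOfIsCompl_apply_left hW' ⟨Φ a, LinearMap.mem_range_self Φ a⟩
    have h2 : e (Submodule.Quotient.mk a) = ⟨Φ a, LinearMap.mem_range_self Φ a⟩ := rfl
    show lift (e.symm (π (Φ a))) = _
    rw [h1, ← h2, LinearEquiv.symm_apply_apply]
    rfl
  have hcomp : ∀ i : Fin n, ∃ c : ℂ, ∀ u : Fin d → ℂ,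
      Ψ (LinearMap.single R (fun _ : Fin n => Fin d → ℂ) i u) = c • u := by
    intro i
    exact burnside_schur hA (Ψ ∘ₗ LinearMap.single R (fun _ : Fin n => Fin d → ℂ) i)
  choose c hc using hcomp
  have h1 : Φ (1 : R) = fun i => v i.castSucc := by
    funext i; simp [Φ]
  have h2 : (fun i : Fin n => v i.castSucc) = ∑ i : Fin n, Pi.single i (v i.castSucc) := by
    rw [Finset.univ_sum_single]
  have hlast : v (Fin.last n) = ∑ i : Fin n, c i • v i.castSucc := by
    have hx := hΨ 1
    rw [h1, one_smul] at hx
    rw [h2, map_sum] at hx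
    rw [← hx]
    exact Finset.sum_congr rfl fun i _ => hc i (v i.castSucc)
  let g : Fin (n + 1) → ℂ := Fin.lastCases (-1) c
  have hsum : ∑ j, g j • v j = 0 := by
    rw [Fin.sum_univ_castSucc]
    have hg2 : g (Fin.last n) = -1 := Fin.lastCases_last ..
    rw [hg2]
    have he : ∑ i : Fin n, g i.castSucc • v i.castSucc = ∑ i : Fin n, c i • v i.castSucc := by
      refine Finset.sum_congr rfl fun i _ => ?_
      rw [show g i.castSucc = c i from Fin.lastCases_castSucc ..]
    rw [he, ← hlast]
    simp
  have := Fintype.linearIndependent_iff.mp hv g hsum (Fin.last n)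
  rw [show g (Fin.last n) = -1 from Fin.lastCases_last ..] at this
  norm_num at this

/-- Jacobson density in our situation. -/
lemma burnside_density [NeZero d]
    (hA : ∀ v : Fin d → ℂ, v ≠ 0 → ∀ w : Fin d → ℂ, ∃ r : R, r • v = w) :
    ∀ (n : ℕ) (v : Fin n → (Fin d → ℂ)), LinearIndependent ℂ v →
      ∀ w : Fin n → (Fin d → ℂ), ∃ r : R, ∀ i, r • v i = w i := by
  intro n
  induction n with
  | zero => exact fun v _ w => ⟨1, fun i => i.elim0⟩
  | succ n ih =>
    intro v hv w
    have hv' : LinearIndependent ℂ (fun i : Fin n => v i.castSucc) :=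
      hv.comp _ (Fin.castSucc_injective n)
    obtain ⟨r0, hr0⟩ := ih _ hv' (fun i => w i.castSucc)
    obtain ⟨r, hrz, hrnz⟩ := burnside_key hA n v hv
    obtain ⟨b, hb⟩ := hA _ hrnz (w (Fin.last n) - r0 • (v (Fin.last n)))
    refine ⟨r0 + b * r, fun i => ?_⟩
    induction i using Fin.lastCases with
    | last =>
      rw [add_smul, mul_smul, hb]
      abel
    | cast i =>
      rw [add_smul, mul_smul, hrz i, smul_zero, add_zero, hr0 i]

end Burnside


section Aux

/-- The span of an irreducible subalgebra is everything (Burnside). -/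
lemma burnside_top {d : ℕ} [NeZero d] (A : Subalgebra ℂ (Module.End ℂ (Fin d → ℂ)))
    (hA : ∀ v : Fin d → ℂ, v ≠ 0 → ∀ w : Fin d → ℂ, ∃ a ∈ A, a v = w)
    (g : Module.End ℂ (Fin d → ℂ)) : g ∈ A := by
  have hA' : ∀ v : Fin d → ℂ, v ≠ 0 → ∀ w : Fin d → ℂ, ∃ r : A, r • v = w := by
    intro v hv w
    obtain ⟨a, ha, haw⟩ := hA v hv w
    exact ⟨⟨a, ha⟩, haw⟩
  obtain ⟨r, hr⟩ := burnside_density (R := A) hA' d ⇑(Pi.basisFun ℂ (Fin d))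
    (Pi.basisFun ℂ (Fin d)).linearIndependent (fun i => g (Pi.basisFun ℂ (Fin d) i))
  have : (r : Module.End ℂ (Fin d → ℂ)) = g := by
    apply (Pi.basisFun ℂ (Fin d)).ext
    intro i
    exact hr i
  exact this ▸ r.2

lemma exists_finset_span_top {W : Type*} [AddCommGroup W] [Module ℂ W] [FiniteDimensional ℂ W]
    (s : Set W) (hs : Submodule.span ℂ s = ⊤) :
    ∃ t : Finset W, ↑t ⊆ s ∧ Submodule.span ℂ (↑t : Set W) = ⊤ := by
  classical
  let b := Module.finBasis ℂ W
  have hb : ∀ i, b i ∈ Submodule.span ℂ s := fun i => hs ▸ Submodule.mem_top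
  have h2 : ∀ i, ∃ t : Finset W, ↑t ⊆ s ∧ b i ∈ Submodule.span ℂ (↑t : Set W) :=
    fun i => Submodule.mem_span_finite_of_mem_span (hb i)
  choose t ht1 ht2 using h2
  refine ⟨Finset.univ.biUnion t, ?_, ?_⟩
  · intro x hx
    simp only [Finset.coe_biUnion, Set.mem_iUnion, Finset.mem_coe] at hx
    obtain ⟨i, _, hx⟩ := hx
    exact ht1 i hx
  · rw [eq_top_iff, ← b.span_eq]
    apply Submodule.span_le.mpr
    rintro x ⟨i, rfl⟩
    refine Submodule.span_mono ?_ (ht2 i)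
    intro y hy
    simp only [Finset.coe_biUnion, Set.mem_iUnion, Finset.mem_coe]
    exact ⟨i, Finset.mem_univ i, hy⟩

lemma hasEigenvalue_of_isRoot_charpoly {d : ℕ} (x : Matrix (Fin d) (Fin d) ℂ) (μ : ℂ)
    (h : x.charpoly.IsRoot μ) : Module.End.HasEigenvalue x.mulVecLin μ := by
  have hdet : ((Matrix.scalar (Fin d) μ) - x).det = 0 := by
    have h' := h
    rw [Polynomial.IsRoot, Matrix.charpoly, eval_det, matPolyEquiv_charmatrix] at h'
    rwa [Polynomial.eval_sub, Polynomial.eval_X, Polynomial.eval_C] at h'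
  obtain ⟨v, hvne, hv⟩ := Matrix.exists_mulVec_eq_zero_iff.mpr hdet
  have hxv : x.mulVec v = μ • v := by
    have h1 : (Matrix.scalar (Fin d) μ).mulVec v - x.mulVec v = 0 := by
      rw [← Matrix.sub_mulVec]
      exact hv
    have h2 : (Matrix.scalar (Fin d) μ).mulVec v = μ • v := by
      funext i
      simp [Matrix.scalar_apply, Matrix.mulVec_diagonal]
    rw [h2] at h1
    exact (sub_eq_zero.mp h1).symm
  apply Module.End.hasEigenvalue_of_hasEigenvector (x := v)
  refine ⟨Module.End.mem_eigenspace_iff.mpr ?_, hvne⟩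
  simpa [Matrix.mulVecLin_apply] using hxv

lemma multiset_sum_exists {N : ℕ} : ∀ (d : ℕ) (s : Multiset ℂ), Multiset.card s = d →
    (∀ z ∈ s, z ^ N = 1) → ∃ f : Fin d → {z : ℂ // z ^ N = 1}, s.sum = ∑ i, (f i : ℂ)
  | 0, s, hc, _ => ⟨fun i => i.elim0, by rw [Multiset.card_eq_zero.mp hc]; simp⟩
  | (d + 1), s, hc, hm => by
      have hne : s ≠ 0 := by
        intro h
        rw [h] at hc
        simp at hc
      obtain ⟨a, ha⟩ := Multiset.exists_mem_of_ne_zero hne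
      obtain ⟨t, rfl⟩ := Multiset.exists_cons_of_mem ha
      have hct : Multiset.card t = d := by simpa using hc
      obtain ⟨f, hf⟩ := multiset_sum_exists d t hct
        (fun z hz => hm z (Multiset.mem_cons_of_mem hz))
      refine ⟨Fin.cases ⟨a, hm a (Multiset.mem_cons_self a t)⟩ f, ?_⟩
      rw [Multiset.sum_cons, Fin.sum_univ_succ]
      simp [hf]

lemma eq_zero_of_trace_mul_eq_zero {d : ℕ} (C : Matrix (Fin d) (Fin d) ℂ)
    (h : ∀ x : Matrix (Fin d) (Fin d) ℂ, (C * x).trace = 0) : C = 0 := by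
  ext i j
  have hx := h (Matrix.single j i 1)
  simp only [Matrix.trace, Matrix.diag, Matrix.mul_apply, Matrix.single,
    Matrix.of_apply, mul_ite, mul_one, mul_zero] at hx
  rw [Finset.sum_comm] at hx
  simp only [ite_and, Finset.sum_ite_eq, Finset.mem_univ, if_true] at hx
  simpa using hx

end Aux

/-- Lemma (Bekka–Guivarc'h).  Let `H` be a subgroup of `GL_d(ℂ)` acting irreducibly on
`ℂ^d`.  If there is an integer `N ≥ 1` such that every eigenvalue of every element of `H`
is an `N`-th root of unity, then `H` is finite. -/
theorem finite_of_irreducible_eigenvalues_roots_of_unity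
    (d : ℕ) (hd : 1 ≤ d) (H : Subgroup (GL (Fin d) ℂ))
    (hirr : ActsIrreducibly d H)
    (N : ℕ) (hN : 1 ≤ N)
    (heig : ∀ h : H, ∀ z : ℂ,
      Module.End.HasEigenvalue
        (Matrix.mulVecLin (((h : GL (Fin d) ℂ) : Matrix (Fin d) (Fin d) ℂ))) z →
      z ^ N = 1) :
    (H : Set (GL (Fin d) ℂ)).Finite := by
  haveI : NeZero d := ⟨Nat.one_le_iff_ne_zero.mp hd⟩
  classical
  -- the matrix image of `H` and its span inside `End ℂ (Fin d → ℂ)`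
  let m : H → Matrix (Fin d) (Fin d) ℂ := fun h => ((h : GL (Fin d) ℂ) : Matrix (Fin d) (Fin d) ℂ)
  let S0 : Set (Module.End ℂ (Fin d → ℂ)) := Set.range fun h : H => Matrix.mulVecLin (m h)
  let P : Submodule ℂ (Module.End ℂ (Fin d → ℂ)) := Submodule.span ℂ S0
  have hmem0 : ∀ h : H, Matrix.mulVecLin (m h) ∈ P := fun h => Submodule.subset_span ⟨h, rfl⟩
  have hmulm : ∀ g g' : H, m g * m g' = m (g * g') := by
    intro g g'
    simp [m]
  have h1P : (1 : Module.End ℂ (Fin d → ℂ)) ∈ P := by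
    have : Matrix.mulVecLin (m (1 : H)) = 1 := by
      have hm1 : m (1 : H) = 1 := by simp [m]
      rw [hm1, Matrix.mulVecLin_one]
      rfl
    exact this ▸ hmem0 1
  have hmulVecLin_mul : ∀ g g' : H,
      Matrix.mulVecLin (m g) * Matrix.mulVecLin (m g') = Matrix.mulVecLin (m (g * g')) := by
    intro g g'
    rw [← hmulm g g', Matrix.mulVecLin_mul]
    rfl
  have hS0mul : S0 * S0 ⊆ S0 := by
    rintro x hx
    rw [Set.mem_mul] at hx
    obtain ⟨a, ⟨g, rfl⟩, b, ⟨g', rfl⟩, rfl⟩ := hx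
    exact ⟨g * g', (hmulVecLin_mul g g').symm⟩
  have hPmul : ∀ x y : Module.End ℂ (Fin d → ℂ), x ∈ P → y ∈ P → x * y ∈ P := by
    intro x y hx hy
    have hle : P * P ≤ P := by
      rw [Submodule.span_mul_span]
      exact Submodule.span_mono hS0mul
    exact hle (Submodule.mul_mem_mul hx hy)
  let A : Subalgebra ℂ (Module.End ℂ (Fin d → ℂ)) := P.toSubalgebra h1P hPmul
  have hAP : ∀ x, x ∈ A ↔ x ∈ P := fun x => Iff.rfl
  -- transitivity of `A` on nonzero vectors, via irreducibility
  have htrans : ∀ v : Fin d → ℂ, v ≠ 0 → ∀ w : Fin d → ℂ, ∃ a ∈ A, a v = w := by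
    intro v hv w
    let U : Submodule ℂ (Fin d → ℂ) := Submodule.map (LinearMap.applyₗ v) P
    have hUmem : ∀ x : Fin d → ℂ, x ∈ U ↔ ∃ a ∈ P, a v = x := by
      intro x
      constructor
      · rintro ⟨a, haP, rfl⟩
        exact ⟨a, haP, rfl⟩
      · rintro ⟨a, haP, rfl⟩
        exact ⟨a, haP, rfl⟩
    have hUinv : ∀ h : H, Submodule.map (Matrix.mulVecLin (m h)) U = U := by
      intro h
      apply le_antisymm
      · rintro x ⟨y, hyU, rfl⟩
        obtain ⟨a, haP, rfl⟩ := (hUmem y).mp hyU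
        refine (hUmem _).mpr ⟨Matrix.mulVecLin (m h) * a, hPmul _ _ (hmem0 h) haP, rfl⟩
      · intro x hxU
        obtain ⟨a, haP, rfl⟩ := (hUmem x).mp hxU
        have hy : (Matrix.mulVecLin (m h⁻¹) * a) v ∈ U :=
          (hUmem _).mpr ⟨_, hPmul _ _ (hmem0 h⁻¹) haP, rfl⟩
        refine ⟨_, hy, ?_⟩
        show (Matrix.mulVecLin (m h)) ((Matrix.mulVecLin (m h⁻¹)) (a v)) = a v
        have : Matrix.mulVecLin (m h) * Matrix.mulVecLin (m h⁻¹) = 1 := by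
          rw [hmulVecLin_mul, mul_inv_cancel]
          have hm1 : m (1 : H) = 1 := by simp [m]
          rw [hm1, Matrix.mulVecLin_one]
          rfl
        have := congrArg (fun f : Module.End ℂ (Fin d → ℂ) => f (a v)) this
        simpa using this
    have hvU : v ∈ U := (hUmem v).mpr ⟨1, h1P, rfl⟩
    have hUne : U ≠ ⊥ := by
      intro h
      rw [h] at hvU
      exact hv (by simpa using hvU)
    have hUtop : U = ⊤ := (hirr U hUinv).resolve_left hUne
    have : w ∈ U := hUtop ▸ Submodule.mem_top
    obtain ⟨a, haP, hav⟩ := (hUmem w).mp this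
    exact ⟨a, haP, hav⟩
  -- Burnside: the span is everything
  have hPtop : P = ⊤ := by
    rw [eq_top_iff]
    intro g _
    exact burnside_top A htrans g
  -- transfer to matrices
  let SM : Set (Matrix (Fin d) (Fin d) ℂ) := Set.range m
  have hspanM : Submodule.span ℂ SM = ⊤ := by
    let e : Matrix (Fin d) (Fin d) ℂ ≃ₗ[ℂ] Module.End ℂ (Fin d → ℂ) := Matrix.toLin'
    have himage : ⇑e '' SM = S0 := by
      ext x
      constructor
      · rintro ⟨y, ⟨h, rfl⟩, rfl⟩
        exact ⟨h, (Matrix.toLin'_apply' _).symm⟩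
      · rintro ⟨h, rfl⟩
        exact ⟨m h, ⟨h, rfl⟩, Matrix.toLin'_apply' _⟩
    apply Submodule.map_injective_of_injective (f := (e : Matrix (Fin d) (Fin d) ℂ →ₗ[ℂ] Module.End ℂ (Fin d → ℂ))) e.injective
    rw [Submodule.map_span]
    have hco : ⇑(e : Matrix (Fin d) (Fin d) ℂ →ₗ[ℂ] Module.End ℂ (Fin d → ℂ)) '' SM = S0 := himage
    rw [hco, Submodule.map_top]
    have : LinearMap.range (e : Matrix (Fin d) (Fin d) ℂ →ₗ[ℂ] Module.End ℂ (Fin d → ℂ)) = ⊤ :=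
      LinearMap.range_eq_top.mpr e.surjective
    rw [this]
    exact hPtop
  obtain ⟨S, hSsub, hSspan⟩ := exists_finset_span_top SM hspanM
  -- the finite set of possible traces
  let T : Set ℂ := Set.range fun f : Fin d → {z : ℂ // z ^ N = 1} => ∑ i, (f i : ℂ)
  have hTfin : T.Finite := by
    have h1 : {z : ℂ | z ^ N = 1}.Finite := by
      have hp : ((X : ℂ[X]) ^ N - C (1 : ℂ)) ≠ 0 := X_pow_sub_C_ne_zero (by omega) 1
      refine Set.Finite.subset (Polynomial.finite_setOf_isRoot hp) ?_
      intro z hz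
      simp only [Set.mem_setOf_eq, Polynomial.IsRoot, Polynomial.eval_sub,
        Polynomial.eval_pow, Polynomial.eval_X, Polynomial.eval_C]
      rw [Set.mem_setOf_eq] at hz
      rw [hz]
      ring
    haveI : Finite {z : ℂ // z ^ N = 1} := h1.to_subtype
    exact Set.finite_range _
  -- all traces of elements of `H` lie in `T`
  have htrace : ∀ g : GL (Fin d) ℂ, g ∈ H →
      Matrix.trace ((g : Matrix (Fin d) (Fin d) ℂ)) ∈ T := by
    intro g hg
    set x : Matrix (Fin d) (Fin d) ℂ := (g : Matrix (Fin d) (Fin d) ℂ) with hx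
    have hroots : ∀ z ∈ x.charpoly.roots, z ^ N = 1 := by
      intro z hz
      have hr : x.charpoly.IsRoot z := (Polynomial.mem_roots'.mp hz).2
      exact heig ⟨g, hg⟩ z (hasEigenvalue_of_isRoot_charpoly x z hr)
    have hcard : Multiset.card x.charpoly.roots = d := by
      have hs := (Polynomial.splits_iff_card_roots.mp (IsAlgClosed.splits x.charpoly))
      rw [hs, Matrix.charpoly_natDegree_eq_dim]
      simp
    obtain ⟨f, hf⟩ := multiset_sum_exists d x.charpoly.roots hcard hroots
    refine ⟨f, ?_⟩
    show ∑ i, (f i : ℂ) = Matrix.trace x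
    rw [← hf, Matrix.trace_eq_sum_roots_charpoly]
  -- the trace map against `S` is injective on `H` with finite range
  let φ : GL (Fin d) ℂ → (S → ℂ) := fun g s => Matrix.trace ((g : Matrix (Fin d) (Fin d) ℂ) * s.1)
  have himg : (φ '' (H : Set (GL (Fin d) ℂ))).Finite := by
    apply Set.Finite.subset (Set.Finite.pi (fun _ : S => hTfin))
    rintro _ ⟨g, hg, rfl⟩
    rw [Set.mem_pi]
    intro s _
    obtain ⟨h', hh'⟩ : ∃ h' : H, m h' = s.1 := hSsub s.2
    have hprod : (g : Matrix (Fin d) (Fin d) ℂ) * s.1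
        = ((g * (h' : GL (Fin d) ℂ) : GL (Fin d) ℂ) : Matrix (Fin d) (Fin d) ℂ) := by
      rw [← hh']
      simp [m]
    show φ g s ∈ T
    have : φ g s = Matrix.trace ((g * (h' : GL (Fin d) ℂ) : GL (Fin d) ℂ)
        : Matrix (Fin d) (Fin d) ℂ) := by
      simp only [φ, hprod]
    rw [this]
    exact htrace _ (H.mul_mem hg h'.2)
  have hinj : Set.InjOn φ (H : Set (GL (Fin d) ℂ)) := by
    intro g hg g' hg' hφ
    have hC : ∀ x : Matrix (Fin d) (Fin d) ℂ,
        Matrix.trace (((g : Matrix (Fin d) (Fin d) ℂ) - (g' : Matrix (Fin d) (Fin d) ℂ)) * x)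
          = 0 := by
      have hspan : ∀ x ∈ Submodule.span ℂ (↑S : Set (Matrix (Fin d) (Fin d) ℂ)),
          Matrix.trace (((g : Matrix (Fin d) (Fin d) ℂ)
            - (g' : Matrix (Fin d) (Fin d) ℂ)) * x) = 0 := by
        intro x hx
        induction hx using Submodule.span_induction with
        | mem x hxS =>
          have hfg := congrFun hφ ⟨x, hxS⟩
          simp only [φ] at hfg
          rw [Matrix.sub_mul, Matrix.trace_sub, hfg, sub_self]
        | zero => simp
        | add x y _ _ ihx ihy => rw [Matrix.mul_add, Matrix.trace_add, ihx, ihy, add_zero]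
        | smul c x _ ih => rw [Matrix.mul_smul, Matrix.trace_smul, ih, smul_zero]
      intro x
      exact hspan x (hSspan ▸ Submodule.mem_top)
    have hzero := eq_zero_of_trace_mul_eq_zero _ hC
    have hgg' : (g : Matrix (Fin d) (Fin d) ℂ) = (g' : Matrix (Fin d) (Fin d) ℂ) :=
      sub_eq_zero.mp hzero
    exact Units.ext hgg'
  exact Set.Finite.of_finite_image himg hinj


end
end

section
/- Let d ≥ 1 and let Γ be a subgroup of GL_d(ℤ) such that every complex eigenvalue of every element of Γ has modulus 1. Then Γ contains a unique maximal unipotent subgroup of finite index Γ⁰; that is, there exists a subgroup Γ⁰ of finite index in Γ all of whose elements are unipotent, such that every finite-index subgroup of Γ all of whose elements are unipotent is contained in Γ⁰. In particular, Γ⁰ is normal in Γ (indeed characteristic). -/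
noncomputable section

/-- An element `g` of `GL_d(ℤ)` is unipotent if `g - 1` is nilpotent. -/
def IsUnipotent {d : ℕ} (g : GL (Fin d) ℤ) : Prop :=
  IsNilpotent (((g : GL (Fin d) ℤ) : Matrix (Fin d) (Fin d) ℤ) - 1)

namespace BGAux

open Polynomial Matrix

variable {d : ℕ}

lemma eval_charpoly' {R : Type*} [CommRing R] (M : Matrix (Fin d) (Fin d) R) (x : R) :
    (M.charpoly).eval x = (x • (1 : Matrix (Fin d) (Fin d) R) - M).det := by
  rw [Matrix.charpoly, ← Polynomial.coe_evalRingHom, RingHom.map_det]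
  congr 1
  ext i j
  simp [charmatrix_apply, Matrix.diagonal_apply, Matrix.one_apply, smul_ite]
  split <;> simp

lemma ψC_inj (M : Matrix (Fin d) (Fin d) ℤ)
    (h : (Int.castRingHom ℂ).mapMatrix M = 0) : M = 0 := by
  ext i j
  have h2 : ((M i j : ℤ) : ℂ) = 0 := by
    simpa [Matrix.map_apply] using
      congrFun (congrFun (show M.map (Int.castRingHom ℂ) = 0 from h) i) j
  exact_mod_cast h2

lemma pow_eq_zero_of_roots_eq (M : Matrix (Fin d) (Fin d) ℤ) (c : ℤ)
    (h : ∀ z : ℂ, ((M.charpoly).map (Int.castRingHom ℂ)).IsRoot z → z = (c : ℂ)) :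
    (M - c • 1) ^ d = 0 := by
  have hmonic : (M.charpoly).Monic := Matrix.charpoly_monic M
  set p : ℂ[X] := (M.charpoly).map (Int.castRingHom ℂ) with hp
  have hpm : p.Monic := hmonic.map _
  have hsplits : p.Splits := IsAlgClosed.splits p
  have hdeg : p.natDegree = d := by
    rw [hp, hmonic.natDegree_map, Matrix.charpoly_natDegree_eq_dim, Fintype.card_fin]
  have hroots : p.roots = Multiset.replicate d ((c : ℂ)) := by
    refine Multiset.eq_replicate.2 ⟨?_, ?_⟩
    · rw [(Polynomial.splits_iff_card_roots).1 hsplits, hdeg]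
    · intro z hz
      exact h z (Polynomial.isRoot_of_mem_roots hz)
  have hpeq : p = (X - C (c : ℂ)) ^ d := by
    conv_lhs => rw [hsplits.eq_prod_roots_of_monic hpm]
    rw [hroots]
    simp [Multiset.map_replicate, Multiset.prod_replicate]
  have hch : Polynomial.aeval ((Int.castRingHom ℂ).mapMatrix M) p = 0 := by
    rw [hp, ← Matrix.charpoly_map M (Int.castRingHom ℂ)]
    have := Matrix.aeval_self_charpoly (M.map (Int.castRingHom ℂ))
    simpa [RingHom.mapMatrix_apply] using this
  rw [hpeq] at hch
  simp only [map_pow, map_sub, Polynomial.aeval_X, Polynomial.aeval_C] at hch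
  apply ψC_inj
  rw [map_pow, map_sub]
  convert hch using 3
  rw [show (c • (1 : Matrix (Fin d) (Fin d) ℤ)) = ((c : Matrix (Fin d) (Fin d) ℤ)) from by
    simp [zsmul_one], map_intCast]
  simp [Algebra.algebraMap_eq_smul_one, zsmul_one]

lemma multiset_abs_prod (s : Multiset ℂ) : norm s.prod = (s.map norm).prod := by
  induction s using Multiset.induction with
  | empty => simp
  | cons a s ih => simp [norm_mul, ih]

lemma int_eq_zero_of_abs_lt {m : ℤ} (h : norm (m : ℂ) < 1) : m = 0 := by
  have : |(m : ℝ)| < 1 := by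
    rwa [show ((m:ℤ):ℂ) = ((m:ℝ):ℂ) by push_cast; ring, Complex.norm_real, Real.norm_eq_abs] at h
  obtain ⟨h1, h2⟩ := abs_lt.mp this
  have h1' : (-1 : ℤ) < m := by exact_mod_cast h1
  have h2' : (m : ℤ) < 1 := by exact_mod_cast h2
  omega

lemma multiset_prod_le_pow (s : Multiset ℝ) (c : ℝ) (hc : 0 ≤ c)
    (h : ∀ x ∈ s, 0 ≤ x ∧ x ≤ c) : 0 ≤ s.prod ∧ s.prod ≤ c ^ s.card := by
  induction s using Multiset.induction with
  | empty => simp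
  | cons a s ih =>
    have ha := h a (by simp)
    have hs := ih (fun x hx => h x (by simp [hx]))
    constructor
    · simpa using mul_nonneg ha.1 hs.1
    · simp only [Multiset.prod_cons, Multiset.card_cons, pow_succ']
      exact mul_le_mul ha.2 hs.2 hs.1 hc

lemma root_eq_zero_of_small (B : Matrix (Fin d) (Fin d) ℤ) (μ : ℂ)
    (hroot : ((B.charpoly).map (Int.castRingHom ℂ)).IsRoot μ)
    (hsmall : ∀ z : ℂ, ((B.charpoly).map (Int.castRingHom ℂ)).IsRoot z → norm z ≤ 2/3) :
    μ = 0 := by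
  have hcomp : (algebraMap ℚ ℂ).comp (Int.castRingHom ℚ) = Int.castRingHom ℂ :=
    Subsingleton.elim _ _
  have hint : IsIntegral ℤ μ := by
    refine ⟨B.charpoly, Matrix.charpoly_monic B, ?_⟩
    rw [show algebraMap ℤ ℂ = Int.castRingHom ℂ from Subsingleton.elim _ _,
      Polynomial.eval₂_eq_eval_map]
    exact hroot
  have hintQ : IsIntegral ℚ μ := hint.tower_top
  set q : ℚ[X] := minpoly ℚ μ with hq
  have hqmonic : q.Monic := minpoly.monic hintQ
  have hdvd : q ∣ (B.charpoly).map (Int.castRingHom ℚ) := by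
    apply minpoly.dvd
    rw [Polynomial.aeval_def, Polynomial.eval₂_eq_eval_map, Polynomial.map_map, hcomp]
    exact hroot
  set qc : ℂ[X] := q.map (algebraMap ℚ ℂ) with hqc
  have hqcmonic : qc.Monic := hqmonic.map _
  have hqcdvd : qc ∣ (B.charpoly).map (Int.castRingHom ℂ) := by
    rw [← hcomp, ← Polynomial.map_map]
    exact Polynomial.map_dvd _ hdvd
  have hsplits : qc.Splits := IsAlgClosed.splits qc
  have hrootssmall : ∀ r ∈ qc.roots, norm r ≤ 2/3 := by
    intro r hr
    apply hsmall
    have : qc.IsRoot r := Polynomial.isRoot_of_mem_roots hr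
    obtain ⟨u, hu⟩ := hqcdvd
    rw [hu]
    simp [Polynomial.IsRoot, Polynomial.eval_mul, this.eq_zero]
  have hqeq : qc = (qc.roots.map fun a => X - C a).prod :=
    hsplits.eq_prod_roots_of_monic hqcmonic
  have hdegpos : 0 < q.natDegree := minpoly.natDegree_pos hintQ
  have hcard : qc.roots.card = q.natDegree := by
    rw [(Polynomial.splits_iff_card_roots).1 hsplits, hqc, hqmonic.natDegree_map]
  have habs : norm (qc.eval 0) < 1 := by
    conv_lhs => rw [hqeq]
    rw [Polynomial.eval_multiset_prod, Multiset.map_map]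
    have h1 : norm ((qc.roots.map fun a => ((X - C a : ℂ[X]).eval 0)).prod)
        = ((qc.roots.map fun a => ((X - C a : ℂ[X]).eval 0)).map norm).prod :=
      multiset_abs_prod _
    rw [show (Multiset.map ((fun p => Polynomial.eval 0 p) ∘ fun a => X - C a) qc.roots)
        = qc.roots.map fun a => ((X - C a : ℂ[X]).eval 0) from rfl, h1]
    have hle : ((qc.roots.map fun a => ((X - C a : ℂ[X]).eval 0)).map norm).prod
        ≤ (2/3 : ℝ) ^ qc.roots.card := by
      have := (multiset_prod_le_pow
        ((qc.roots.map fun a => ((X - C a : ℂ[X]).eval 0)).map norm) (2/3 : ℝ)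
        (by norm_num) ?_).2
      · simpa using this
      · intro x hx
        simp only [Multiset.mem_map] at hx
        obtain ⟨y, ⟨r, hr, rfl⟩, rfl⟩ := hx
        refine ⟨by positivity, by simpa using hrootssmall r hr⟩
    calc _ ≤ (2/3:ℝ) ^ qc.roots.card := hle
      _ < 1 := by
          apply pow_lt_one₀ (by norm_num) (by norm_num)
          omega
  have hmin : minpoly ℚ μ = (minpoly ℤ μ).map (algebraMap ℤ ℚ) :=
    minpoly.isIntegrallyClosed_eq_field_fractions' ℚ hint
  have heval : qc.eval 0 = (((minpoly ℤ μ).coeff 0 : ℤ) : ℂ) := by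
    rw [← Polynomial.coeff_zero_eq_eval_zero, hqc, Polynomial.coeff_map, hq, hmin,
      Polynomial.coeff_map]
    simp
  rw [heval] at habs
  have hc0 : (minpoly ℤ μ).coeff 0 = 0 := int_eq_zero_of_abs_lt habs
  have hq0 : q.coeff 0 = 0 := by
    rw [hq, hmin, Polynomial.coeff_map, hc0]; simp
  exact (minpoly.coeff_zero_eq_zero hintQ).1 hq0

lemma multiset_re_sum (s : Multiset ℂ) : s.sum.re = (s.map Complex.re).sum := by
  induction s using Multiset.induction with
  | empty => simp
  | cons a s ih => simp [ih]

lemma multiset_sum_zero_nonneg (s : Multiset ℝ) (h0 : ∀ x ∈ s, 0 ≤ x) (hs : s.sum = 0) :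
    ∀ x ∈ s, x = 0 := by
  induction s using Multiset.induction with
  | empty => simp
  | cons a s ih =>
    have ha := h0 a (by simp)
    have hsum : 0 ≤ s.sum := Multiset.sum_nonneg (fun x hx => h0 x (by simp [hx]))
    simp only [Multiset.sum_cons] at hs
    have ha0 : a = 0 := by linarith
    have hs0 : s.sum = 0 := by linarith
    intro x hx
    rcases Multiset.mem_cons.mp hx with rfl | hx
    · exact ha0
    · exact ih (fun y hy => h0 y (by simp [hy])) hs0 x hx

lemma unimodular_sum_card_eq_one (s : Multiset ℂ) (habs : ∀ r ∈ s, norm r = 1)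
    (hsum : s.sum = (Multiset.card s : ℂ)) : ∀ r ∈ s, r = 1 := by
  have hre : ∀ r ∈ s, r.re ≤ 1 := by
    intro r hr
    calc r.re ≤ |r.re| := le_abs_self _
      _ ≤ norm r := Complex.abs_re_le_norm r
      _ = 1 := habs r hr
  have hsumre : (s.map Complex.re).sum = (Multiset.card s : ℝ) := by
    have := congrArg Complex.re hsum
    rw [multiset_re_sum] at this
    simpa using this
  have hzero : ∀ x ∈ s.map (fun r => 1 - Complex.re r), x = 0 := by
    apply multiset_sum_zero_nonneg
    · intro x hx
      obtain ⟨r, hr, rfl⟩ := Multiset.mem_map.mp hx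
      have := hre r hr
      linarith
    · have : (s.map (fun r => 1 - Complex.re r)).sum
          = (Multiset.card s : ℝ) - (s.map Complex.re).sum := by
        induction s using Multiset.induction with
        | empty => simp
        | cons a t ih => simp [ih]; ring
      rw [this, hsumre]; ring
  intro r hr
  have h1 : r.re = 1 := by
    have := hzero (1 - r.re) (Multiset.mem_map_of_mem _ hr)
    linarith
  have h2 : r.im = 0 := by
    have habs' := habs r hr
    have : (norm r) ^ 2 = r.re ^ 2 + r.im ^ 2 := by
      rw [Complex.sq_norm, Complex.normSq_apply]; ring
    rw [habs', h1] at this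
    nlinarith
  exact Complex.ext h1 h2

lemma trace_map_complex (M : Matrix (Fin d) (Fin d) ℤ) :
    (M.map (Int.castRingHom ℂ)).trace = ((M.trace : ℤ) : ℂ) := by
  simp [Matrix.trace, Matrix.diag, Matrix.map_apply]

lemma trace_map_rat (M : Matrix (Fin d) (Fin d) ℤ) :
    (M.map (Int.castRingHom ℚ)).trace = ((M.trace : ℤ) : ℚ) := by
  simp [Matrix.trace, Matrix.diag, Matrix.map_apply]

lemma trace_eq_zero_of_nilpotent (M : Matrix (Fin d) (Fin d) ℤ)
    (h : IsNilpotent M) : M.trace = 0 := by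
  set N := (Int.castRingHom ℂ).mapMatrix M with hN
  have hNnil : IsNilpotent N := h.map ((Int.castRingHom ℂ).mapMatrix)
  have hroots : ∀ z ∈ N.charpoly.roots, z = 0 := by
    intro z hz
    by_contra hz0
    have hisroot : N.charpoly.IsRoot z := Polynomial.isRoot_of_mem_roots hz
    rw [Polynomial.IsRoot, eval_charpoly'] at hisroot
    have hunit : IsUnit (z • (1 : Matrix (Fin d) (Fin d) ℂ) - N) := by
      have h1 : z • (1 : Matrix (Fin d) (Fin d) ℂ) - N = z • (1 - z⁻¹ • N) := by
        rw [smul_sub, smul_smul, mul_inv_cancel₀ hz0, one_smul]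
      rw [h1]
      have hnil2 : IsNilpotent (z⁻¹ • N) := hNnil.smul _
      have h2 := hnil2.isUnit_one_sub
      rw [show (z • (1 - z⁻¹ • N)) = (Units.mk0 z hz0) • (1 - z⁻¹ • N) from rfl]
      exact (isUnit_smul_iff _ _).mpr h2
    have h5 := hunit
    rw [Matrix.isUnit_iff_isUnit_det, hisroot] at h5
    exact h5.ne_zero rfl
  have htr : N.trace = 0 := by
    rw [Matrix.trace_eq_sum_roots_charpoly]
    exact Multiset.sum_eq_zero hroots
  rw [hN, RingHom.mapMatrix_apply, trace_map_complex] at htr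
  exact_mod_cast htr

lemma exists_comp_inverse (P : ℚ[X]) (k : ℚ) (hk : k ≠ 0)
    (h0 : P.coeff 0 = 0) (h1 : P.coeff 1 = k) :
    ∀ m : ℕ, ∃ Q : ℚ[X], Q.coeff 0 = 0 ∧ X ^ m ∣ (Q.comp P - X) := by
  have hXdvd : X ∣ P := Polynomial.X_dvd_iff.mpr h0
  have hPeq : P = X * P.divX := by
    conv_lhs => rw [← Polynomial.X_mul_divX_add P]
    rw [h0]; simp
  have hdivX0 : P.divX.coeff 0 = k := by rw [Polynomial.coeff_divX]; exact h1
  have hpowcoeff : ∀ j : ℕ, ((P.divX) ^ j).coeff 0 = k ^ j := by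
    intro j
    induction j with
    | zero => simp
    | succ j ih => rw [pow_succ, Polynomial.mul_coeff_zero, ih, hdivX0, pow_succ]
  have hPm : ∀ m : ℕ, (P ^ m).coeff m = k ^ m := by
    intro m
    conv_lhs => rw [hPeq]
    rw [mul_pow]
    have h := Polynomial.coeff_X_pow_mul ((P.divX) ^ m) m 0
    rw [zero_add] at h
    rw [h, hpowcoeff]
  have hPmlow : ∀ m i : ℕ, i < m → (P ^ m).coeff i = 0 := by
    intro m i him
    have : (X : ℚ[X]) ^ m ∣ P ^ m := pow_dvd_pow_of_dvd hXdvd m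
    exact (Polynomial.X_pow_dvd_iff.mp this) i him
  intro m
  induction m with
  | zero => exact ⟨0, by simp, by simp⟩
  | succ m ih =>
    obtain ⟨Q, hQ0, hdvd⟩ := ih
    set c : ℚ := (Q.comp P - X).coeff m with hc
    refine ⟨Q - C (c / k ^ m) * X ^ m, ?_, ?_⟩
    · rcases Nat.eq_zero_or_pos m with rfl | hm
      · have hc0 : c = 0 := by
          rw [hc]
          simp only [Polynomial.coeff_sub]
          rw [Polynomial.coeff_zero_eq_eval_zero, Polynomial.eval_comp]
          rw [show P.eval 0 = P.coeff 0 from (Polynomial.coeff_zero_eq_eval_zero P).symm, h0,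
            show Q.eval 0 = Q.coeff 0 from (Polynomial.coeff_zero_eq_eval_zero Q).symm, hQ0]
          simp
        simp [hc0, hQ0]
      · simp only [Polynomial.coeff_sub, hQ0, Polynomial.coeff_C_mul, Polynomial.coeff_X_pow]
        rw [if_neg (by omega)]
        simp
    · rw [Polynomial.X_pow_dvd_iff]
      intro i hi
      have hcomp : (Q - C (c / k ^ m) * X ^ m).comp P = Q.comp P - C (c / k ^ m) * P ^ m := by
        simp [Polynomial.sub_comp, Polynomial.mul_comp, Polynomial.C_comp, Polynomial.pow_comp,
          Polynomial.X_comp]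
      rw [hcomp, show Q.comp P - C (c / k ^ m) * P ^ m - X
        = (Q.comp P - X) - C (c / k ^ m) * P ^ m by ring]
      rcases Nat.lt_or_ge i m with him | him
      · rw [Polynomial.coeff_sub, (Polynomial.X_pow_dvd_iff.mp hdvd) i him,
          Polynomial.coeff_C_mul, hPmlow m i him]
        simp
      · have : i = m := by omega
        subst this
        rw [Polynomial.coeff_sub, Polynomial.coeff_C_mul, hPm, ← hc,
          div_mul_cancel₀ c (pow_ne_zero _ hk)]
        simp

lemma pow_mem_of_mul_closed {R : Type*} [CommRing R] {M : Type*} [Ring M] [Algebra R M]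
    (J : Submodule R M) (hmul : ∀ x ∈ J, ∀ y ∈ J, x * y ∈ J)
    {b : M} (hb : b ∈ J) : ∀ i : ℕ, 0 < i → b ^ i ∈ J := by
  intro i hi
  induction i with
  | zero => omega
  | succ i ih =>
    rcases Nat.eq_zero_or_pos i with rfl | hi'
    · simpa using hb
    · rw [pow_succ]
      exact hmul _ (ih hi') _ hb

lemma mem_span_of_pow_mem {M : Type*} [Ring M] [Algebra ℚ M]
    (J : Submodule ℚ M) (hmul : ∀ x ∈ J, ∀ y ∈ J, x * y ∈ J)
    (a : M) (ha : IsNilpotent a) (k : ℕ) (hk : 0 < k)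
    (hb : (1 + a) ^ k - 1 ∈ J) : a ∈ J := by
  obtain ⟨m, hm⟩ := ha
  set P : ℚ[X] := (X + 1) ^ k - 1 with hP
  have hP0 : P.coeff 0 = 0 := by
    simp [hP, Polynomial.coeff_sub, Polynomial.coeff_X_add_one_pow]
  have hP1 : P.coeff 1 = (k : ℚ) := by
    simp [hP, Polynomial.coeff_sub, Polynomial.coeff_X_add_one_pow, Polynomial.coeff_one]
  have hkQ : (k : ℚ) ≠ 0 := Nat.cast_ne_zero.mpr hk.ne'
  obtain ⟨Q, hQ0, hdvd⟩ := exists_comp_inverse P (k : ℚ) hkQ hP0 hP1 m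
  have hbP : Polynomial.aeval a P = (1 + a) ^ k - 1 := by
    simp [hP, add_comm]
  have haQ : Polynomial.aeval ((1 + a) ^ k - 1) Q = a := by
    obtain ⟨E, hE⟩ := hdvd
    have h2 : Q.comp P = X + X ^ m * E := by rw [← hE]; ring
    have := congrArg (Polynomial.aeval a) h2
    rw [Polynomial.aeval_comp, hbP] at this
    rw [this]
    simp [map_add, _root_.map_mul, map_pow, hm]
  rw [← haQ, Polynomial.aeval_eq_sum_range]
  apply Submodule.sum_mem
  intro i hi
  rcases Nat.eq_zero_or_pos i with rfl | hipos
  · rw [hQ0]; simp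
  · exact Submodule.smul_mem _ _ (pow_mem_of_mul_closed J hmul hb i hipos)

end BGAux

open Polynomial Matrix BGAux in
/-- Corollary (Bekka–Guivarc'h).  Let `Γ` be a subgroup of `GL_d(ℤ)` such that every
complex eigenvalue of every element of `Γ` has modulus `1`.  Then `Γ` contains a unique
maximal unipotent subgroup of finite index `Γ⁰`: a finite-index subgroup all of whose
elements are unipotent, containing every finite-index subgroup of `Γ` all of whose
elements are unipotent.  In particular, `Γ⁰` is normal in `Γ`. -/
theorem exists_maximal_unipotent_finite_index_subgroup
    (d : ℕ) (hd : 1 ≤ d) (Γ : Subgroup (GL (Fin d) ℤ))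
    (heig : ∀ γ ∈ Γ, ∀ z : ℂ,
      (((( γ : GL (Fin d) ℤ) : Matrix (Fin d) (Fin d) ℤ).charpoly).map
        (Int.castRingHom ℂ)).IsRoot z → ‖z‖ = 1) :
    ∃ Γ0 : Subgroup (GL (Fin d) ℤ), Γ0 ≤ Γ ∧
      (Γ0.subgroupOf Γ).index ≠ 0 ∧
      (∀ g ∈ Γ0, IsUnipotent g) ∧
      (∀ Γ1 : Subgroup (GL (Fin d) ℤ), Γ1 ≤ Γ → (Γ1.subgroupOf Γ).index ≠ 0 →
        (∀ g ∈ Γ1, IsUnipotent g) → Γ1 ≤ Γ0) ∧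
      (Γ0.subgroupOf Γ).Normal := by
  classical
  haveI : Nonempty (Fin d) := ⟨⟨0, hd⟩⟩
  -- the reduction mod 3 homomorphism
  set Φ : GL (Fin d) ℤ →* GL (Fin d) (ZMod 3) :=
    Units.map ((Int.castRingHom (ZMod 3)).mapMatrix).toMonoidHom with hΦ
  set N : Subgroup (GL (Fin d) ℤ) := Γ ⊓ Φ.ker with hN
  have hNΓ : N ≤ Γ := inf_le_left
  -- the cast to rational matrices
  set ψ : Matrix (Fin d) (Fin d) ℤ →+* Matrix (Fin d) (Fin d) ℚ :=
    (Int.castRingHom ℚ).mapMatrix with hψ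
  -- elements of N are unipotent, with explicit nilpotency
  have hNuni : ∀ n : GL (Fin d) ℤ, n ∈ N →
      (((n : GL (Fin d) ℤ) : Matrix (Fin d) (Fin d) ℤ) - 1) ^ d = 0 := by
    intro n hn
    have hker : Φ n = 1 := (Subgroup.mem_inf.mp hn).2
    have hentry : ∀ i j, ((((n : GL (Fin d) ℤ) : Matrix (Fin d) (Fin d) ℤ) i j : ℤ) : ZMod 3)
        = (1 : Matrix (Fin d) (Fin d) (ZMod 3)) i j := by
      intro i j
      have h1 : ((Φ n : GL (Fin d) (ZMod 3)) : Matrix (Fin d) (Fin d) (ZMod 3))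
          = ((n : GL (Fin d) ℤ) : Matrix (Fin d) (Fin d) ℤ).map (Int.castRingHom (ZMod 3)) := rfl
      rw [hker] at h1
      have := congrFun (congrFun h1.symm i) j
      simpa [Matrix.map_apply] using this
    have hdvd : ∀ i j, (3 : ℤ) ∣
        ((((n : GL (Fin d) ℤ) : Matrix (Fin d) (Fin d) ℤ) - 1) i j) := by
      intro i j
      have h9 : (((((n : GL (Fin d) ℤ) : Matrix (Fin d) (Fin d) ℤ) - 1) i j : ℤ) : ZMod 3) = 0 := by
        have := hentry i j
        rw [Matrix.sub_apply]
        push_cast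
        rw [this]
        rcases eq_or_ne i j with rfl | hij
        · simp [Matrix.one_apply]
        · simp [Matrix.one_apply, hij]
      have h10 := (ZMod.intCast_zmod_eq_zero_iff_dvd _ 3).mp h9
      exact_mod_cast h10
    set B : Matrix (Fin d) (Fin d) ℤ :=
      Matrix.of fun i j => ((((n : GL (Fin d) ℤ) : Matrix (Fin d) (Fin d) ℤ) - 1) i j) / 3 with hB
    have hB3 : (((n : GL (Fin d) ℤ) : Matrix (Fin d) (Fin d) ℤ) - 1) = (3 : ℤ) • B := by
      ext i j
      rw [Matrix.smul_apply, hB]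
      simp only [Matrix.of_apply]
      rw [smul_eq_mul, Int.mul_ediv_cancel' (hdvd i j)]
    -- roots of charpoly of B are small
    have hsmall : ∀ z : ℂ, ((B.charpoly).map (Int.castRingHom ℂ)).IsRoot z →
        norm z ≤ 2/3 := by
      intro z hz
      have hroot : ((((n : GL (Fin d) ℤ) : Matrix (Fin d) (Fin d) ℤ).charpoly).map
          (Int.castRingHom ℂ)).IsRoot (1 + 3 * z) := by
        rw [Polynomial.IsRoot, ← Matrix.charpoly_map, eval_charpoly']
        have hmap : (((n : GL (Fin d) ℤ) : Matrix (Fin d) (Fin d) ℤ)).map (Int.castRingHom ℂ)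
            = 1 + (3 : ℂ) • (B.map (Int.castRingHom ℂ)) := by
          ext i j
          have h0 := congrFun (congrFun hB3 i) j
          simp only [Matrix.sub_apply, Matrix.smul_apply, smul_eq_mul, Matrix.one_apply] at h0
          simp only [Matrix.map_apply, Matrix.add_apply, Matrix.smul_apply, Matrix.one_apply,
            smul_eq_mul]
          rcases eq_or_ne i j with rfl | hij
          · simp only [if_pos rfl] at h0 ⊢
            simp at h0
            have h01 : ((n : GL (Fin d) ℤ) : Matrix (Fin d) (Fin d) ℤ) i i = 1 + 3 * B i i := by
              linear_combination h0
            rw [h01]; simp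
          · simp only [if_neg hij] at h0 ⊢
            simp at h0
            have h01 : ((n : GL (Fin d) ℤ) : Matrix (Fin d) (Fin d) ℤ) i j = 3 * B i j := by
              linear_combination h0
            rw [h01]; simp
        rw [hmap]
        have hfactor : (1 + 3 * z) • (1 : Matrix (Fin d) (Fin d) ℂ)
            - (1 + (3:ℂ) • B.map (Int.castRingHom ℂ))
            = (3 : ℂ) • (z • (1 : Matrix (Fin d) (Fin d) ℂ) - B.map (Int.castRingHom ℂ)) := by
          rw [add_smul, one_smul, smul_sub, smul_smul]
          ring_nf
          abel
        rw [hfactor, Matrix.det_smul]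
        rw [Polynomial.IsRoot, ← Matrix.charpoly_map, eval_charpoly'] at hz
        rw [hz, mul_zero]
      have h1 := heig n (hNΓ hn) (1 + 3*z) hroot
      have h2 : norm (3 * z) ≤ 2 := by
        calc norm (3 * z) = norm ((1 + 3*z) + (-1)) := by ring_nf
          _ ≤ norm (1 + 3*z) + norm (-1) := norm_add_le _ _
          _ = 2 := by
              have habs1 : norm (-1 : ℂ) = 1 := by simp
              rw [h1, habs1]; norm_num
      have h3 : (3:ℝ) * norm z ≤ 2 := by
        rwa [norm_mul, Complex.norm_ofNat] at h2
      linarith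
    have hBnil : B ^ d = 0 := by
      have h0 := pow_eq_zero_of_roots_eq B 0 (fun z hz => by
        simpa using root_eq_zero_of_small B z hz hsmall)
      simpa using h0
    rw [hB3, _root_.smul_pow, hBnil, smul_zero]
  -- the span J
  set S : Set (Matrix (Fin d) (Fin d) ℚ) :=
    { x | ∃ n : GL (Fin d) ℤ, n ∈ N ∧ x = ψ ((n : GL (Fin d) ℤ) : Matrix (Fin d) (Fin d) ℤ) - 1 }
    with hS
  set J : Submodule ℚ (Matrix (Fin d) (Fin d) ℚ) := Submodule.span ℚ S with hJ
  have hSJ : S ⊆ J := Submodule.subset_span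
  have hmemS : ∀ n : GL (Fin d) ℤ, n ∈ N →
      ψ ((n : GL (Fin d) ℤ) : Matrix (Fin d) (Fin d) ℤ) - 1 ∈ J :=
    fun n hn => hSJ ⟨n, hn, rfl⟩
  -- J is multiplicatively closed
  have hgen : ∀ x ∈ S, ∀ y ∈ S, x * y ∈ J := by
    rintro x ⟨n, hn, rfl⟩ y ⟨m, hm, rfl⟩
    have hprod : (ψ ((n : GL (Fin d) ℤ) : Matrix (Fin d) (Fin d) ℤ) - 1) *
        (ψ ((m : GL (Fin d) ℤ) : Matrix (Fin d) (Fin d) ℤ) - 1)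
        = (ψ (((n*m : GL (Fin d) ℤ) : GL (Fin d) ℤ) : Matrix (Fin d) (Fin d) ℤ) - 1)
          - (ψ ((n : GL (Fin d) ℤ) : Matrix (Fin d) (Fin d) ℤ) - 1)
          - (ψ ((m : GL (Fin d) ℤ) : Matrix (Fin d) (Fin d) ℤ) - 1) := by
      have : (((n*m : GL (Fin d) ℤ) : GL (Fin d) ℤ) : Matrix (Fin d) (Fin d) ℤ)
          = ((n : GL (Fin d) ℤ) : Matrix (Fin d) (Fin d) ℤ) *
            ((m : GL (Fin d) ℤ) : Matrix (Fin d) (Fin d) ℤ) := rfl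
      rw [this, _root_.map_mul]
      noncomm_ring
    rw [hprod]
    exact Submodule.sub_mem _ (Submodule.sub_mem _ (hmemS _ (mul_mem hn hm)) (hmemS _ hn))
      (hmemS _ hm)
  have hmulJ : ∀ x ∈ J, ∀ y ∈ J, x * y ∈ J := by
    intro x hx
    refine Submodule.span_induction (p := fun x _ => ∀ y ∈ J, x * y ∈ J) ?_ ?_ ?_ ?_ hx
    · intro x hxS
      intro y hy
      refine Submodule.span_induction (p := fun y _ => x * y ∈ J) ?_ ?_ ?_ ?_ hy
      · intro y hyS; exact hgen x hxS y hyS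
      · simp
      · intro y z _ _ h1 h2; rw [mul_add]; exact Submodule.add_mem _ h1 h2
      · intro a y _ h1; rw [mul_smul_comm]; exact Submodule.smul_mem _ _ h1
    · intro y _; simp
    · intro x z _ _ h1 h2 y hy; rw [add_mul]; exact Submodule.add_mem _ (h1 y hy) (h2 y hy)
    · intro a x _ h1 y hy; rw [smul_mul_assoc]; exact Submodule.smul_mem _ _ (h1 y hy)
  -- traces vanish on J
  have htrJ : ∀ x ∈ J, x.trace = 0 := by
    intro x hx
    refine Submodule.span_induction (p := fun x _ => x.trace = 0) ?_ ?_ ?_ ?_ hx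
    · rintro x ⟨n, hn, rfl⟩
      have heq : ψ ((n : GL (Fin d) ℤ) : Matrix (Fin d) (Fin d) ℤ) - 1
          = (((n : GL (Fin d) ℤ) : Matrix (Fin d) (Fin d) ℤ) - 1).map (Int.castRingHom ℚ) := by
        rw [show (((n : GL (Fin d) ℤ) : Matrix (Fin d) (Fin d) ℤ) - 1).map (Int.castRingHom ℚ)
          = ψ (((n : GL (Fin d) ℤ) : Matrix (Fin d) (Fin d) ℤ) - 1) from rfl, map_sub, _root_.map_one]
      rw [heq, trace_map_rat, trace_eq_zero_of_nilpotent _ ⟨d, hNuni n hn⟩]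
      simp
    · simp
    · intro x y _ _ h1 h2; rw [Matrix.trace_add, h1, h2, add_zero]
    · intro a x _ h1; rw [Matrix.trace_smul, h1, smul_zero]
  -- the key lemma: membership in 1 + J implies unipotency
  have hkey : ∀ g : GL (Fin d) ℤ, g ∈ Γ →
      ψ ((g : GL (Fin d) ℤ) : Matrix (Fin d) (Fin d) ℤ) - 1 ∈ J → IsUnipotent g := by
    intro g hgΓ hgJ
    set M : Matrix (Fin d) (Fin d) ℤ := ((g : GL (Fin d) ℤ) : Matrix (Fin d) (Fin d) ℤ) with hM
    have htr0 : (ψ M - 1).trace = 0 := htrJ _ hgJ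
    have htrM : M.trace = d := by
      rw [Matrix.trace_sub, Matrix.trace_one] at htr0
      have : (ψ M).trace = (Fintype.card (Fin d) : ℚ) := by linarith [htr0]
      rw [show ψ M = M.map (Int.castRingHom ℚ) from rfl, trace_map_rat] at this
      rw [Fintype.card_fin] at this
      exact_mod_cast this
    -- over ℂ
    set MC : Matrix (Fin d) (Fin d) ℂ := M.map (Int.castRingHom ℂ) with hMC
    have hmonic : MC.charpoly.Monic := Matrix.charpoly_monic MC
    have hsplits : MC.charpoly.Splits := IsAlgClosed.splits _
    have hcard : Multiset.card MC.charpoly.roots = d := by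
      rw [(Polynomial.splits_iff_card_roots).1 hsplits, Matrix.charpoly_natDegree_eq_dim,
        Fintype.card_fin]
    have hrootsabs : ∀ r ∈ MC.charpoly.roots, norm r = 1 := by
      intro r hr
      apply heig g hgΓ
      rw [← hM, ← Matrix.charpoly_map]
      exact Polynomial.isRoot_of_mem_roots hr
    have hsum : MC.charpoly.roots.sum = (Multiset.card MC.charpoly.roots : ℂ) := by
      rw [← Matrix.trace_eq_sum_roots_charpoly, hMC, trace_map_complex, htrM, hcard]
      simp
    have hall1 : ∀ r ∈ MC.charpoly.roots, r = 1 :=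
      unimodular_sum_card_eq_one _ hrootsabs hsum
    have hroots1 : ∀ z : ℂ, ((M.charpoly).map (Int.castRingHom ℂ)).IsRoot z → z = ((1:ℤ) : ℂ) := by
      intro z hz
      have hne : (M.charpoly).map (Int.castRingHom ℂ) ≠ 0 :=
        ((Matrix.charpoly_monic M).map _).ne_zero
      have : z ∈ MC.charpoly.roots := by
        rw [hMC, Matrix.charpoly_map]
        rw [Polynomial.mem_roots hne]
        exact hz
      simpa using hall1 z this
    have := pow_eq_zero_of_roots_eq M 1 hroots1
    refine ⟨d, ?_⟩
    simpa using this
  -- inverses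
  have hinv : ∀ g : GL (Fin d) ℤ, g ∈ Γ →
      ψ ((g : GL (Fin d) ℤ) : Matrix (Fin d) (Fin d) ℤ) - 1 ∈ J →
      ψ (((g⁻¹ : GL (Fin d) ℤ) : GL (Fin d) ℤ) : Matrix (Fin d) (Fin d) ℤ) - 1 ∈ J := by
    intro g hgΓ hgJ
    set a : Matrix (Fin d) (Fin d) ℚ :=
      ψ ((g : GL (Fin d) ℤ) : Matrix (Fin d) (Fin d) ℤ) - 1 with ha
    obtain ⟨m, hm⟩ := hkey g hgΓ hgJ
    have hanil : a ^ (m+1) = 0 := by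
      have h1 : a = (((g : GL (Fin d) ℤ) : Matrix (Fin d) (Fin d) ℤ) - 1).map
          (Int.castRingHom ℚ) := by
        rw [ha, show (((g : GL (Fin d) ℤ) : Matrix (Fin d) (Fin d) ℤ) - 1).map (Int.castRingHom ℚ)
          = ψ (((g : GL (Fin d) ℤ) : Matrix (Fin d) (Fin d) ℤ) - 1) from rfl, map_sub, _root_.map_one]
      rw [h1, show (((g : GL (Fin d) ℤ) : Matrix (Fin d) (Fin d) ℤ) - 1).map (Int.castRingHom ℚ)
        = (Int.castRingHom ℚ).mapMatrix (((g : GL (Fin d) ℤ) : Matrix (Fin d) (Fin d) ℤ) - 1)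
        from rfl, ← map_pow, pow_succ, hm]
      simp
    -- geometric series: the inverse
    set Ssum : Matrix (Fin d) (Fin d) ℚ := ∑ i ∈ Finset.range (m+1), (-a) ^ i with hSsum
    have hright : Ssum * (1 + a) = 1 := by
      have := geom_sum_mul (-a) (m+1)
      rw [hSsum]
      have h2 : (-a) ^ (m+1) = (-1)^(m+1) * a^(m+1) := by
        rw [neg_pow]
      rw [h2, hanil, mul_zero, zero_sub] at this
      have h3 : (∑ i ∈ Finset.range (m + 1), (-a) ^ i) * (-(1 + a)) = -1 := by
        rw [show -(1+a) = -a - 1 by noncomm_ring]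
        exact this
      have h4 := congrArg (fun x => -x) h3
      simp only [mul_neg, neg_neg] at h4
      exact h4
    have hleft : ψ (((g⁻¹ : GL (Fin d) ℤ) : GL (Fin d) ℤ) : Matrix (Fin d) (Fin d) ℤ) * (1 + a)
        = 1 := by
      have h5 : (1 : Matrix (Fin d) (Fin d) ℚ) + a
          = ψ ((g : GL (Fin d) ℤ) : Matrix (Fin d) (Fin d) ℤ) := by rw [ha]; noncomm_ring
      rw [h5, ← _root_.map_mul]
      have h6 : (((g⁻¹ : GL (Fin d) ℤ) : GL (Fin d) ℤ) : Matrix (Fin d) (Fin d) ℤ) *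
          ((g : GL (Fin d) ℤ) : Matrix (Fin d) (Fin d) ℤ) = 1 := by
        have := Units.inv_mul g
        exact_mod_cast this
      rw [h6, _root_.map_one]
    have hrightinv : (1 + a) *
        ψ (((g⁻¹ : GL (Fin d) ℤ) : GL (Fin d) ℤ) : Matrix (Fin d) (Fin d) ℤ) = 1 := by
      have h5 : (1 : Matrix (Fin d) (Fin d) ℚ) + a
          = ψ ((g : GL (Fin d) ℤ) : Matrix (Fin d) (Fin d) ℤ) := by rw [ha]; noncomm_ring
      rw [h5, ← _root_.map_mul]
      have h6 : ((g : GL (Fin d) ℤ) : Matrix (Fin d) (Fin d) ℤ) *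
          (((g⁻¹ : GL (Fin d) ℤ) : GL (Fin d) ℤ) : Matrix (Fin d) (Fin d) ℤ) = 1 := by
        have := Units.mul_inv g
        exact_mod_cast this
      rw [h6, _root_.map_one]
    have hSeq : ψ (((g⁻¹ : GL (Fin d) ℤ) : GL (Fin d) ℤ) : Matrix (Fin d) (Fin d) ℤ) = Ssum := by
      calc ψ (((g⁻¹ : GL (Fin d) ℤ) : GL (Fin d) ℤ) : Matrix (Fin d) (Fin d) ℤ)
          = 1 * ψ (((g⁻¹ : GL (Fin d) ℤ) : GL (Fin d) ℤ) : Matrix (Fin d) (Fin d) ℤ) := by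
            rw [one_mul]
        _ = (Ssum * (1 + a)) * ψ (((g⁻¹ : GL (Fin d) ℤ) : GL (Fin d) ℤ) :
              Matrix (Fin d) (Fin d) ℤ) := by rw [hright]
        _ = Ssum * ((1 + a) * ψ (((g⁻¹ : GL (Fin d) ℤ) : GL (Fin d) ℤ) :
              Matrix (Fin d) (Fin d) ℤ)) := by rw [mul_assoc]
        _ = Ssum := by rw [hrightinv, mul_one]
    rw [hSeq, hSsum, Finset.sum_range_succ']
    have hsum2 : (∑ i ∈ Finset.range m, (-a) ^ (i+1)) + (-a)^0 - 1
        = ∑ i ∈ Finset.range m, (-a) ^ (i+1) := by simp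
    rw [hsum2]
    apply Submodule.sum_mem
    intro i _
    exact pow_mem_of_mul_closed J hmulJ (Submodule.neg_mem _ hgJ) (i+1) (Nat.succ_pos i)
  -- definition of Γ0
  set Γ0 : Subgroup (GL (Fin d) ℤ) :=
    { carrier := { g | g ∈ Γ ∧ ψ ((g : GL (Fin d) ℤ) : Matrix (Fin d) (Fin d) ℤ) - 1 ∈ J }
      one_mem' := ⟨Γ.one_mem, by simp⟩
      mul_mem' := by
        rintro g h ⟨hg1, hg2⟩ ⟨hh1, hh2⟩
        refine ⟨mul_mem hg1 hh1, ?_⟩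
        have hprod : ψ (((g*h : GL (Fin d) ℤ) : GL (Fin d) ℤ) : Matrix (Fin d) (Fin d) ℤ) - 1
            = (ψ ((g : GL (Fin d) ℤ) : Matrix (Fin d) (Fin d) ℤ) - 1) *
              (ψ ((h : GL (Fin d) ℤ) : Matrix (Fin d) (Fin d) ℤ) - 1)
              + (ψ ((g : GL (Fin d) ℤ) : Matrix (Fin d) (Fin d) ℤ) - 1)
              + (ψ ((h : GL (Fin d) ℤ) : Matrix (Fin d) (Fin d) ℤ) - 1) := by
          have : (((g*h : GL (Fin d) ℤ) : GL (Fin d) ℤ) : Matrix (Fin d) (Fin d) ℤ)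
              = ((g : GL (Fin d) ℤ) : Matrix (Fin d) (Fin d) ℤ) *
                ((h : GL (Fin d) ℤ) : Matrix (Fin d) (Fin d) ℤ) := rfl
          rw [this, _root_.map_mul]
          noncomm_ring
        rw [hprod]
        exact Submodule.add_mem _ (Submodule.add_mem _ (hmulJ _ hg2 _ hh2) hg2) hh2
      inv_mem' := by
        rintro g ⟨hg1, hg2⟩
        exact ⟨inv_mem hg1, hinv g hg1 hg2⟩ } with hΓ0
  have hΓ0mem : ∀ g : GL (Fin d) ℤ, g ∈ Γ0 ↔
      g ∈ Γ ∧ ψ ((g : GL (Fin d) ℤ) : Matrix (Fin d) (Fin d) ℤ) - 1 ∈ J := by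
    intro g; rfl
  have hNΓ0 : N ≤ Γ0 := by
    intro n hn
    exact (hΓ0mem n).mpr ⟨hNΓ hn, hmemS n hn⟩
  -- finite index of N in Γ
  have hNidx : (N.subgroupOf Γ).index ≠ 0 := by
    have hker : N.subgroupOf Γ = (Φ.comp Γ.subtype).ker := by
      ext x
      simp only [Subgroup.mem_subgroupOf, MonoidHom.mem_ker, MonoidHom.comp_apply,
        Subgroup.coe_subtype, hN, Subgroup.mem_inf]
      exact ⟨fun h => h.2, fun h => ⟨x.2, h⟩⟩
    rw [hker, Subgroup.index_ker]
    rw [Nat.card_ne_zero]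
    exact ⟨⟨1, 1, map_one _⟩, Set.Finite.to_subtype (Set.toFinite _)⟩
  refine ⟨Γ0, ?_, ?_, ?_, ?_, ?_⟩
  · intro g hg; exact ((hΓ0mem g).mp hg).1
  · intro h0
    apply hNidx
    have hle : N.subgroupOf Γ ≤ Γ0.subgroupOf Γ := by
      intro x hx
      exact Subgroup.mem_subgroupOf.mpr (hNΓ0 (Subgroup.mem_subgroupOf.mp hx))
    have := Subgroup.index_dvd_of_le hle
    rw [h0] at this
    exact Nat.eq_zero_of_zero_dvd this
  · intro g hg
    obtain ⟨hg1, hg2⟩ := (hΓ0mem g).mp hg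
    exact hkey g hg1 hg2
  · intro Γ1 hΓ1 hidx1 huni1 g hg
    have hgΓ : g ∈ Γ := hΓ1 hg
    refine (hΓ0mem g).mpr ⟨hgΓ, ?_⟩
    -- find k ≥ 1 with g^k ∈ N
    have hfin : Finite (Γ ⧸ N.subgroupOf Γ) := by
      have h := hNidx
      rw [Subgroup.index_eq_card] at h
      exact Nat.finite_of_card_ne_zero h
    set x : Γ := ⟨g, hgΓ⟩ with hx
    obtain ⟨i1, i2, hne, heq2⟩ := Finite.exists_ne_map_eq_of_infinite
      (fun n : ℕ => ((x ^ n : Γ) : Γ ⧸ N.subgroupOf Γ))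
    -- wlog i1 < i2
    have hswap : ∃ a b : ℕ, a < b ∧
        ((x ^ a : Γ) : Γ ⧸ N.subgroupOf Γ) = ((x ^ b : Γ) : Γ ⧸ N.subgroupOf Γ) := by
      rcases Nat.lt_or_ge i1 i2 with h | h
      · exact ⟨i1, i2, h, heq2⟩
      · have : i2 < i1 := by omega
        exact ⟨i2, i1, this, heq2.symm⟩
    obtain ⟨a, b, hab, habeq⟩ := hswap
    have hpowmem : x ^ (b - a) ∈ N.subgroupOf Γ := by
      have := (QuotientGroup.eq).mp habeq
      have h7 : (x ^ a)⁻¹ * x ^ b = x ^ (b - a) := by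
        have hb : x ^ b = x ^ a * x ^ (b - a) := by
          rw [← pow_add]
          congr 1
          omega
        rw [hb, inv_mul_cancel_left]
      rwa [h7] at this
    set k : ℕ := b - a with hk
    have hkpos : 0 < k := by omega
    have hgkN : g ^ k ∈ N := by
      have := Subgroup.mem_subgroupOf.mp hpowmem
      simpa [hx] using this
    -- now apply the span lemma
    set a' : Matrix (Fin d) (Fin d) ℚ :=
      ψ ((g : GL (Fin d) ℤ) : Matrix (Fin d) (Fin d) ℤ) - 1 with ha'
    have hanil : IsNilpotent a' := by
      obtain ⟨m, hm⟩ := huni1 g hg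
      refine ⟨m, ?_⟩
      have h1 : a' = (((g : GL (Fin d) ℤ) : Matrix (Fin d) (Fin d) ℤ) - 1).map
          (Int.castRingHom ℚ) := by
        rw [ha', show (((g : GL (Fin d) ℤ) : Matrix (Fin d) (Fin d) ℤ) - 1).map (Int.castRingHom ℚ)
          = ψ (((g : GL (Fin d) ℤ) : Matrix (Fin d) (Fin d) ℤ) - 1) from rfl, map_sub, _root_.map_one]
      rw [h1, show (((g : GL (Fin d) ℤ) : Matrix (Fin d) (Fin d) ℤ) - 1).map (Int.castRingHom ℚ)
        = (Int.castRingHom ℚ).mapMatrix (((g : GL (Fin d) ℤ) : Matrix (Fin d) (Fin d) ℤ) - 1)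
        from rfl, ← map_pow, hm]
      simp
    have hbJ : (1 + a') ^ k - 1 ∈ J := by
      have h8 : (1 : Matrix (Fin d) (Fin d) ℚ) + a'
          = ψ ((g : GL (Fin d) ℤ) : Matrix (Fin d) (Fin d) ℤ) := by rw [ha']; noncomm_ring
      have h9 : (((g^k : GL (Fin d) ℤ) : GL (Fin d) ℤ) : Matrix (Fin d) (Fin d) ℤ)
          = ((g : GL (Fin d) ℤ) : Matrix (Fin d) (Fin d) ℤ) ^ k := by
        exact_mod_cast (Units.val_pow_eq_pow_val g k)
      have := hmemS _ hgkN
      rwa [h9, map_pow, ← h8] at this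
    exact mem_span_of_pow_mem J hmulJ a' hanil k hkpos hbJ
  · -- normality
    constructor
    intro x hx γ
    rw [Subgroup.mem_subgroupOf] at hx ⊢
    obtain ⟨hx1, hx2⟩ := (hΓ0mem _).mp hx
    have hγΓ : (γ : GL (Fin d) ℤ) ∈ Γ := γ.2
    have hcoe : ((γ * x * γ⁻¹ : Γ) : GL (Fin d) ℤ)
        = (γ : GL (Fin d) ℤ) * (x : GL (Fin d) ℤ) * (γ : GL (Fin d) ℤ)⁻¹ := by
      push_cast
      rfl
    refine (hΓ0mem _).mpr ?_
    rw [hcoe]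
    constructor
    · exact mul_mem (mul_mem hγΓ hx1) (inv_mem hγΓ)
    · -- conjugation stability of J
      have hconjJ : ∀ y ∈ J,
          ψ (((γ : GL (Fin d) ℤ) : GL (Fin d) ℤ) : Matrix (Fin d) (Fin d) ℤ) * y *
          ψ ((((γ : GL (Fin d) ℤ)⁻¹ : GL (Fin d) ℤ) : GL (Fin d) ℤ) :
            Matrix (Fin d) (Fin d) ℤ) ∈ J := by
        intro y hy
        refine Submodule.span_induction (p := fun y _ =>
          ψ (((γ : GL (Fin d) ℤ) : GL (Fin d) ℤ) : Matrix (Fin d) (Fin d) ℤ) * y *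
          ψ ((((γ : GL (Fin d) ℤ)⁻¹ : GL (Fin d) ℤ) : GL (Fin d) ℤ) :
            Matrix (Fin d) (Fin d) ℤ) ∈ J) ?_ ?_ ?_ ?_ hy
        · rintro y ⟨n, hn, rfl⟩
          have hmulinv : ψ (((γ : GL (Fin d) ℤ) : GL (Fin d) ℤ) : Matrix (Fin d) (Fin d) ℤ) *
              ψ ((((γ : GL (Fin d) ℤ)⁻¹ : GL (Fin d) ℤ) : GL (Fin d) ℤ) :
                Matrix (Fin d) (Fin d) ℤ) = 1 := by
            rw [← _root_.map_mul]
            have h6 : ((γ : GL (Fin d) ℤ) : Matrix (Fin d) (Fin d) ℤ) *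
                ((((γ : GL (Fin d) ℤ)⁻¹ : GL (Fin d) ℤ) : GL (Fin d) ℤ) :
                  Matrix (Fin d) (Fin d) ℤ) = 1 := by
              exact_mod_cast Units.mul_inv (γ : GL (Fin d) ℤ)
            rw [h6, _root_.map_one]
          have hexpand : ψ (((γ : GL (Fin d) ℤ) : GL (Fin d) ℤ) : Matrix (Fin d) (Fin d) ℤ) *
              (ψ ((n : GL (Fin d) ℤ) : Matrix (Fin d) (Fin d) ℤ) - 1) *
              ψ ((((γ : GL (Fin d) ℤ)⁻¹ : GL (Fin d) ℤ) : GL (Fin d) ℤ) :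
                Matrix (Fin d) (Fin d) ℤ)
              = ψ ((((γ : GL (Fin d) ℤ) * n * (γ : GL (Fin d) ℤ)⁻¹ : GL (Fin d) ℤ) :
                  GL (Fin d) ℤ) : Matrix (Fin d) (Fin d) ℤ) - 1 := by
            have h7 : ((((γ : GL (Fin d) ℤ) * n * (γ : GL (Fin d) ℤ)⁻¹ : GL (Fin d) ℤ) :
                GL (Fin d) ℤ) : Matrix (Fin d) (Fin d) ℤ)
                = ((γ : GL (Fin d) ℤ) : Matrix (Fin d) (Fin d) ℤ) *
                  ((n : GL (Fin d) ℤ) : Matrix (Fin d) (Fin d) ℤ) *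
                  ((((γ : GL (Fin d) ℤ)⁻¹ : GL (Fin d) ℤ) : GL (Fin d) ℤ) :
                    Matrix (Fin d) (Fin d) ℤ) := rfl
            rw [h7, _root_.map_mul, _root_.map_mul]
            rw [show ψ (((γ : GL (Fin d) ℤ) : GL (Fin d) ℤ) : Matrix (Fin d) (Fin d) ℤ) *
              (ψ ((n : GL (Fin d) ℤ) : Matrix (Fin d) (Fin d) ℤ) - 1) *
              ψ ((((γ : GL (Fin d) ℤ)⁻¹ : GL (Fin d) ℤ) : GL (Fin d) ℤ) :
                Matrix (Fin d) (Fin d) ℤ)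
              = ψ (((γ : GL (Fin d) ℤ) : GL (Fin d) ℤ) : Matrix (Fin d) (Fin d) ℤ) *
                ψ ((n : GL (Fin d) ℤ) : Matrix (Fin d) (Fin d) ℤ) *
                ψ ((((γ : GL (Fin d) ℤ)⁻¹ : GL (Fin d) ℤ) : GL (Fin d) ℤ) :
                  Matrix (Fin d) (Fin d) ℤ)
                - ψ (((γ : GL (Fin d) ℤ) : GL (Fin d) ℤ) : Matrix (Fin d) (Fin d) ℤ) *
                  ψ ((((γ : GL (Fin d) ℤ)⁻¹ : GL (Fin d) ℤ) : GL (Fin d) ℤ) :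
                    Matrix (Fin d) (Fin d) ℤ) from by noncomm_ring, hmulinv]
          rw [hexpand]
          apply hmemS
          have hnN : (γ : GL (Fin d) ℤ) * n * (γ : GL (Fin d) ℤ)⁻¹ ∈ N := by
            rw [hN, Subgroup.mem_inf]
            obtain ⟨hn1, hn2⟩ := Subgroup.mem_inf.mp hn
            constructor
            · exact mul_mem (mul_mem hγΓ hn1) (inv_mem hγΓ)
            · exact (MonoidHom.normal_ker Φ).conj_mem n hn2 (γ : GL (Fin d) ℤ)
          exact hnN
        · simp
        · intro y z _ _ h1 h2
          rw [mul_add, add_mul]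
          exact Submodule.add_mem _ h1 h2
        · intro c y _ h1
          rw [mul_smul_comm, smul_mul_assoc]
          exact Submodule.smul_mem _ _ h1
      have hexpand2 : ψ ((((γ : GL (Fin d) ℤ) * (x : GL (Fin d) ℤ) * (γ : GL (Fin d) ℤ)⁻¹ :
            GL (Fin d) ℤ) : GL (Fin d) ℤ) : Matrix (Fin d) (Fin d) ℤ) - 1
          = ψ (((γ : GL (Fin d) ℤ) : GL (Fin d) ℤ) : Matrix (Fin d) (Fin d) ℤ) *
            (ψ (((x : GL (Fin d) ℤ)) : Matrix (Fin d) (Fin d) ℤ) - 1) *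
            ψ ((((γ : GL (Fin d) ℤ)⁻¹ : GL (Fin d) ℤ) : GL (Fin d) ℤ) :
              Matrix (Fin d) (Fin d) ℤ) := by
        have hmulinv : ψ (((γ : GL (Fin d) ℤ) : GL (Fin d) ℤ) : Matrix (Fin d) (Fin d) ℤ) *
            ψ ((((γ : GL (Fin d) ℤ)⁻¹ : GL (Fin d) ℤ) : GL (Fin d) ℤ) :
              Matrix (Fin d) (Fin d) ℤ) = 1 := by
          rw [← _root_.map_mul]
          have h6 : ((γ : GL (Fin d) ℤ) : Matrix (Fin d) (Fin d) ℤ) *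
              ((((γ : GL (Fin d) ℤ)⁻¹ : GL (Fin d) ℤ) : GL (Fin d) ℤ) :
                Matrix (Fin d) (Fin d) ℤ) = 1 := by
            exact_mod_cast Units.mul_inv (γ : GL (Fin d) ℤ)
          rw [h6, _root_.map_one]
        have h7 : ((((γ : GL (Fin d) ℤ) * (x : GL (Fin d) ℤ) * (γ : GL (Fin d) ℤ)⁻¹ :
            GL (Fin d) ℤ) : GL (Fin d) ℤ) : Matrix (Fin d) (Fin d) ℤ)
            = ((γ : GL (Fin d) ℤ) : Matrix (Fin d) (Fin d) ℤ) *
              (((x : GL (Fin d) ℤ)) : Matrix (Fin d) (Fin d) ℤ) *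
              ((((γ : GL (Fin d) ℤ)⁻¹ : GL (Fin d) ℤ) : GL (Fin d) ℤ) :
                Matrix (Fin d) (Fin d) ℤ) := rfl
        rw [h7, _root_.map_mul, _root_.map_mul]
        rw [show ψ (((γ : GL (Fin d) ℤ) : GL (Fin d) ℤ) : Matrix (Fin d) (Fin d) ℤ) *
            (ψ (((x : GL (Fin d) ℤ)) : Matrix (Fin d) (Fin d) ℤ) - 1) *
            ψ ((((γ : GL (Fin d) ℤ)⁻¹ : GL (Fin d) ℤ) : GL (Fin d) ℤ) :
              Matrix (Fin d) (Fin d) ℤ)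
            = ψ (((γ : GL (Fin d) ℤ) : GL (Fin d) ℤ) : Matrix (Fin d) (Fin d) ℤ) *
              ψ (((x : GL (Fin d) ℤ)) : Matrix (Fin d) (Fin d) ℤ) *
              ψ ((((γ : GL (Fin d) ℤ)⁻¹ : GL (Fin d) ℤ) : GL (Fin d) ℤ) :
                Matrix (Fin d) (Fin d) ℤ)
              - ψ (((γ : GL (Fin d) ℤ) : GL (Fin d) ℤ) : Matrix (Fin d) (Fin d) ℤ) *
                ψ ((((γ : GL (Fin d) ℤ)⁻¹ : GL (Fin d) ℤ) : GL (Fin d) ℤ) :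
                  Matrix (Fin d) (Fin d) ℤ) from by noncomm_ring, hmulinv]
      rw [hexpand2]
      exact hconjJ _ hx2

end
end
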